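/- arXiv:1506.02548 — 7 statements merged into one kernel-verified Lean document; each statement's English description precedes it below -/
import Mathlib

section
/- Let q be a prime power, let m, n be positive integers, let c_0, c_1, …, c_{n-1} ∈ F_q and A ∈ M_m(F_q), and let T be the (m,n)-block companion matrix over F_q whose (i,j) block (0-indexed, blocks of size m×m) is I_m if i = j+1 and j < n−1, is c_i·A if j = n−1, and is the zero matrix otherwise. (a) If c_0 ≠ 0 and A is invertible, then for every row vector S_0 ∈ F_q^{mn} the sequence S_k = S_0·T^k is purely periodic, i.e., there exists r ≥ 1 with S_{k+r} = S_k for all k ≥ 0. (b) Conversely, if for every nonzero b ∈ F_q^m the sequence S_k = S_0·T^k with initial state S_0 = (b, 0, …, 0) ∈ F_q^{mn} is purely periodic, then the matrix c_0·A is invertible. -/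
/-- The `(m,n)`-block companion matrix over `F` determined by scalars
`c : Fin n → F` and an `m × m` matrix `A`. -/
def blockCompanion {F : Type*} [CommRing F] (m n : ℕ) (c : Fin n → F)
    (A : Matrix (Fin m) (Fin m) F) :
    Matrix (Fin n × Fin m) (Fin n × Fin m) F :=
  fun x y =>
    if (y.1 : ℕ) = n - 1 then c x.1 * A x.2 y.2
    else if (x.1 : ℕ) = (y.1 : ℕ) + 1 then (if x.2 = y.2 then (1 : F) else 0)
    else 0

section aux
variable {F : Type} [Field F] {m n : ℕ} (c : Fin n → F) (A : Matrix (Fin m) (Fin m) F)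

lemma colA (v : Fin n × Fin m → F) (y : Fin n × Fin m) (hy : (y.1 : ℕ) ≠ n - 1) :
    Matrix.vecMul v (blockCompanion m n c A) y
      = v (⟨(y.1 : ℕ) + 1, by have := y.1.isLt; omega⟩, y.2) := by
  have hlt : (y.1 : ℕ) + 1 < n := by have := y.1.isLt; omega
  rw [Matrix.vecMul, dotProduct]
  rw [Finset.sum_eq_single ((⟨(y.1 : ℕ) + 1, hlt⟩ : Fin n), y.2)]
  · simp [blockCompanion, hy]
  · intro p _ hp
    simp only [blockCompanion, if_neg hy]
    rcases eq_or_ne ((p.1 : ℕ)) ((y.1 : ℕ) + 1) with h1 | h1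
    · rcases eq_or_ne p.2 y.2 with h2 | h2
      · exact absurd (show p = ((⟨(y.1 : ℕ) + 1, hlt⟩ : Fin n), y.2) from
          Prod.ext (Fin.ext h1) h2) hp
      · simp [h1, h2]
    · simp [h1]
  · simp

lemma colB (v : Fin n × Fin m → F) (y : Fin n × Fin m) (hy : (y.1 : ℕ) = n - 1) :
    Matrix.vecMul v (blockCompanion m n c A) y
      = ∑ p : Fin n × Fin m, v p * (c p.1 * A p.2 y.2) := by
  rw [Matrix.vecMul, dotProduct]
  simp [blockCompanion, hy]

lemma ker_triv (hn : 0 < n) (hU : IsUnit (c ⟨0, hn⟩ • A)) (v : Fin n × Fin m → F)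
    (hv : Matrix.vecMul v (blockCompanion m n c A) = 0) : v = 0 := by
  -- first: v vanishes off block 0
  have h1 : ∀ p : Fin n × Fin m, (p.1 : ℕ) ≠ 0 → v p = 0 := by
    intro p hp
    have hlt : (p.1 : ℕ) - 1 < n := by have := p.1.isLt; omega
    have hy : ((⟨(p.1 : ℕ) - 1, hlt⟩ : Fin n) : ℕ) ≠ n - 1 := by
      simp only; have := p.1.isLt; omega
    have := colA c A v (⟨(p.1 : ℕ) - 1, hlt⟩, p.2) hy
    rw [hv] at this
    have hpe : ((⟨(p.1 : ℕ) - 1 + 1, by have := p.1.isLt; omega⟩ : Fin n), p.2) = p := by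
      ext
      · simp; omega
      · rfl
    rw [hpe] at this
    exact this.symm
  -- block 0 is in kernel of c0 • A
  have h0 : Matrix.vecMul (fun i => v (⟨0, hn⟩, i)) (c ⟨0, hn⟩ • A) = 0 := by
    funext j
    have hy : (((⟨n - 1, by omega⟩ : Fin n), j).1 : ℕ) = n - 1 := rfl
    have := colB c A v (⟨n - 1, by omega⟩, j) hy
    rw [hv] at this
    have hsum : ∑ p : Fin n × Fin m, v p * (c p.1 * A p.2 j)
        = ∑ i : Fin m, v (⟨0, hn⟩, i) * (c ⟨0, hn⟩ * A i j) := by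
      rw [Fintype.sum_prod_type]
      rw [Finset.sum_eq_single (⟨0, hn⟩ : Fin n)]
      · intro a _ ha
        apply Finset.sum_eq_zero
        intro i _
        have : v (a, i) = 0 := h1 (a, i) (by simpa [Fin.ext_iff] using ha)
        simp [this]
      · simp
    rw [hsum] at this
    have : ∑ i : Fin m, v (⟨0, hn⟩, i) * (c ⟨0, hn⟩ * A i j) = 0 := this.symm
    rw [Matrix.vecMul, dotProduct]
    simpa [Matrix.smul_apply, mul_comm, mul_left_comm, mul_assoc] using this
  have hb0 : (fun i => v (⟨0, hn⟩, i)) = 0 := by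
    obtain ⟨U, hUe⟩ := hU
    have hmi : (c ⟨0, hn⟩ • A) * ((U⁻¹ : (Matrix (Fin m) (Fin m) F)ˣ) : Matrix (Fin m) (Fin m) F) = 1 := by
      rw [← hUe, ← Units.val_mul, mul_inv_cancel]; rfl
    have h2 : Matrix.vecMul (Matrix.vecMul (fun i => v (⟨0, hn⟩, i)) (c ⟨0, hn⟩ • A))
        ((U⁻¹ : (Matrix (Fin m) (Fin m) F)ˣ) : Matrix (Fin m) (Fin m) F)
        = Matrix.vecMul (fun i => v (⟨0, hn⟩, i)) 1 := by
      rw [Matrix.vecMul_vecMul, hmi]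
    rw [h0, Matrix.zero_vecMul, Matrix.vecMul_one] at h2
    exact h2.symm
  funext p
  rcases eq_or_ne ((p.1 : ℕ)) 0 with h | h
  · have hpe : p = (⟨0, hn⟩, p.2) := by
      ext
      · exact h
      · rfl
    rw [hpe]
    exact congrFun hb0 p.2
  · exact h1 p h

end aux

/-- (a) If `c ⟨0, hn⟩ ≠ 0` and `A` is invertible, then for every row vector `S0` the
sequence `S_k = S0 · T^k` is purely periodic.
(b) Conversely, if for every nonzero `b ∈ F^m` the sequence starting from the
initial state `(b, 0, …, 0)` is purely periodic, then `c 0 • A` is invertible. -/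


theorem stmt1 (F : Type) [Field F] [Fintype F] (m n : ℕ) (hm : 0 < m) (hn : 0 < n)
    (c : Fin n → F) (A : Matrix (Fin m) (Fin m) F) :
    (c ⟨0, hn⟩ ≠ 0 → IsUnit A →
      ∀ S0 : Fin n × Fin m → F, ∃ r : ℕ, 1 ≤ r ∧
        ∀ k : ℕ,
          Matrix.vecMul S0 (blockCompanion m n c A ^ (k + r)) =
            Matrix.vecMul S0 (blockCompanion m n c A ^ k)) ∧
    ((∀ b : Fin m → F, b ≠ 0 →
        ∃ r : ℕ, 1 ≤ r ∧
          ∀ k : ℕ,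
            Matrix.vecMul (fun x : Fin n × Fin m => if x.1 = ⟨0, hn⟩ then b x.2 else 0)
                (blockCompanion m n c A ^ (k + r)) =
              Matrix.vecMul (fun x : Fin n × Fin m => if x.1 = ⟨0, hn⟩ then b x.2 else 0)
                (blockCompanion m n c A ^ k)) →
      IsUnit (c ⟨0, hn⟩ • A)) := by
  set T := blockCompanion m n c A with hT
  constructor
  · intro hc hA S0
    -- T is invertible
    have hU : IsUnit (c ⟨0, hn⟩ • A) := by
      rw [Matrix.isUnit_iff_isUnit_det, Matrix.det_smul, isUnit_iff_ne_zero]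
      have hdA : A.det ≠ 0 := isUnit_iff_ne_zero.mp ((Matrix.isUnit_iff_isUnit_det A).mp hA)
      exact mul_ne_zero (pow_ne_zero _ hc) hdA
    have hdet : T.det ≠ 0 := by
      intro hdet
      obtain ⟨v, hv0, hv⟩ := Matrix.exists_vecMul_eq_zero_iff.mpr hdet
      exact hv0 (ker_triv c A hn hU v hv)
    have hunit : IsUnit T := by
      rw [Matrix.isUnit_iff_isUnit_det]
      exact hdet.isUnit
    set u := hunit.unit with hu
    refine ⟨orderOf u, orderOf_pos u, ?_⟩
    have hpow : T ^ orderOf u = 1 := by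
      rw [← hunit.unit_spec, ← Units.val_pow_eq_pow_val, ← hu, pow_orderOf_eq_one,
        Units.val_one]
    intro k
    rw [pow_add, hpow, mul_one]
  · intro H
    rw [Matrix.isUnit_iff_isUnit_det, isUnit_iff_ne_zero]
    intro hdet
    obtain ⟨b, hb0, hb⟩ := Matrix.exists_vecMul_eq_zero_iff.mpr hdet
    set S0 : Fin n × Fin m → F := fun x => if x.1 = ⟨0, hn⟩ then b x.2 else 0 with hS0
    obtain ⟨r, hr1, hr⟩ := H b hb0
    -- S0 * T = 0
    have hstep : Matrix.vecMul S0 T = 0 := by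
      funext y
      rcases eq_or_ne ((y.1 : ℕ)) (n - 1) with hy | hy
      · rw [hT, colB c A S0 y hy]
        simp only [Pi.zero_apply]
        rw [Fintype.sum_prod_type]
        rw [Finset.sum_eq_single (⟨0, hn⟩ : Fin n)]
        · have := congrFun hb y.2
          simp only [Matrix.vecMul, dotProduct, Matrix.smul_apply, Pi.zero_apply,
            smul_eq_mul] at this
          simp only [hS0, if_pos rfl]
          rw [← this]
        · intro a _ ha
          apply Finset.sum_eq_zero
          intro i _
          simp [hS0, ha]
        · simp
      · rw [hT, colA c A S0 y hy]
        have : ((⟨(y.1 : ℕ) + 1, by have := y.1.isLt; omega⟩ : Fin n)) ≠ ⟨0, hn⟩ := by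
          simp [Fin.ext_iff]
        simp [hS0, this]
    have h0 := hr 0
    rw [zero_add, pow_zero, Matrix.vecMul_one] at h0
    have hrz : Matrix.vecMul S0 (T ^ r) = 0 := by
      obtain ⟨s, rfl⟩ : ∃ s, r = s + 1 := ⟨r - 1, by omega⟩
      rw [pow_succ', ← Matrix.vecMul_vecMul, hstep, Matrix.zero_vecMul]
    rw [hrz] at h0
    apply hb0
    funext i
    have := congrFun h0.symm (⟨0, hn⟩, i)
    simpa [hS0] using this
end

section
/- Let q be a prime power, let m, n be positive integers, let c_1, …, c_{n-1} ∈ F_q, let B ∈ M_m(F_q) be invertible, and let T = T(c_1,…,c_{n−1};B) be the associated (m,n)-block companion matrix. Write the characteristic polynomial of B as ψ_B(X) = ∑_{i=0}^m b_i X^i (monic, b_m = 1) and set g(X) = 1 + c_1X + ⋯ + c_{n−1}X^{n−1} ∈ F_q[X]. Then the characteristic polynomial of T equals ∑_{i=0}^m b_i · X^{n·i} · g(X)^{m−i}. -/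
open Polynomial Matrix Finset

section Aux

variable {F : Type*} [Field F]

/-- evaluation of the charpoly as a determinant. -/
lemma charpoly_eval₂ {S : Type*} [CommRing S] {m : ℕ} (f : F →+* S) (r : S)
    (A : Matrix (Fin m) (Fin m) F) :
    Polynomial.eval₂ f r A.charpoly = (r • (1 : Matrix (Fin m) (Fin m) S) - A.map f).det := by
  have h : Polynomial.eval₂ f r A.charpoly
      = ((Polynomial.eval₂RingHom f r).mapMatrix (charmatrix A)).det :=
    RingHom.map_det (Polynomial.eval₂RingHom f r) (charmatrix A)
  rw [h, RingHom.mapMatrix_apply]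
  congr 1
  ext i j
  by_cases hij : i = j
  · subst hij
    simp [charmatrix_apply_eq, Matrix.map_apply]
  · simp [charmatrix_apply_ne _ _ _ hij, Matrix.map_apply, Matrix.one_apply_ne hij,
      Matrix.smul_apply]

lemma det_aux [Nontrivial F] {m : ℕ} (A : Matrix (Fin m) (Fin m) F) (a b : Polynomial F)
    (hb : b ≠ 0) :
    (a • (1 : Matrix (Fin m) (Fin m) F[X]) - b • A.map C).det
      = ∑ i ∈ Finset.range (m + 1), C (A.charpoly.coeff i) * a ^ i * b ^ (m - i) := by
  set K := FractionRing (Polynomial F)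
  set φ : Polynomial F →+* K := algebraMap (Polynomial F) K with hφ
  have hinj : Function.Injective φ := IsFractionRing.injective (Polynomial F) K
  apply hinj
  have hbne : φ b ≠ 0 := fun h => hb (hinj (by simpa using h))
  set ψ : F →+* K := φ.comp (C : F →+* Polynomial F) with hψ
  set r : K := φ a / φ b with hr
  -- LHS
  have h1 : φ ((a • (1 : Matrix (Fin m) (Fin m) F[X]) - b • A.map C).det)
      = (φ a • (1 : Matrix (Fin m) (Fin m) K) - φ b • A.map ψ).det := by
    rw [show φ ((a • (1 : Matrix (Fin m) (Fin m) F[X]) - b • A.map C).det)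
      = (φ.mapMatrix (a • (1 : Matrix (Fin m) (Fin m) F[X]) - b • A.map C)).det from
      RingHom.map_det _ _]
    congr 1
    ext i j
    by_cases hij : i = j
    · subst hij
      simp [Matrix.smul_apply, Matrix.one_apply_eq, Matrix.map_apply, hψ]
    · simp [Matrix.smul_apply, Matrix.one_apply_ne hij, Matrix.map_apply, hψ]
  have h2 : φ a • (1 : Matrix (Fin m) (Fin m) K) - φ b • A.map ψ
      = φ b • (r • (1 : Matrix (Fin m) (Fin m) K) - A.map ψ) := by
    ext i j
    by_cases hij : i = j
    · subst hij
      simp only [Matrix.sub_apply, Matrix.smul_apply, Matrix.one_apply_eq, smul_eq_mul]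
      rw [hr, mul_one, mul_one, mul_sub, mul_div_cancel₀ _ hbne]
    · simp [Matrix.sub_apply, Matrix.smul_apply, Matrix.one_apply_ne hij, smul_eq_mul, mul_sub]
      ring
  have h3 : (r • (1 : Matrix (Fin m) (Fin m) K) - A.map ψ).det
      = Polynomial.eval₂ ψ r A.charpoly := (charpoly_eval₂ ψ r A).symm
  have hdeg : A.charpoly.natDegree < m + 1 := by
    rw [Matrix.charpoly_natDegree_eq_dim]
    simp
  rw [h1, h2, Matrix.det_smul, h3, Polynomial.eval₂_eq_sum_range' ψ hdeg r, map_sum,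
    Finset.mul_sum]
  refine Finset.sum_congr rfl fun i hi => ?_
  have him : i ≤ m := Nat.lt_succ_iff.mp (Finset.mem_range.mp hi)
  rw [_root_.map_mul, _root_.map_mul, map_pow, map_pow]
  have hbm : φ b ^ m = φ b ^ (m - i) * φ b ^ i := by
    rw [← pow_add, Nat.sub_add_cancel him]
  rw [Fintype.card_fin, hbm, hr, div_pow]
  rw [show φ (C (A.charpoly.coeff i)) = ψ (A.charpoly.coeff i) from rfl]
  have hbi : φ b ^ i ≠ 0 := pow_ne_zero _ hbne
  rw [mul_assoc, mul_left_comm (φ b ^ i), mul_div_cancel₀ _ hbi]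
  ring

variable (m n : ℕ)

/-- The row-operation matrix. -/
noncomputable def Emat : Matrix (Fin (n+1) × Fin m) (Fin (n+1) × Fin m) F[X] :=
  fun x y => if x.1 = 0 then (if x.2 = y.2 then X ^ (y.1 : ℕ) else 0)
    else (if x = y then 1 else 0)

variable (c : Fin (n+1) → F) (B : Matrix (Fin m) (Fin m) F) (g : Polynomial F)

/-- The matrix after the row operation. -/
noncomputable def Mp : Matrix (Fin (n+1) × Fin m) (Fin (n+1) × Fin m) F[X] :=
  fun x y =>
    if x.1 = 0 then
      (if (y.1 : ℕ) = n then
        X ^ (n+1) * (if x.2 = y.2 then 1 else (0:F[X])) - g * C (B x.2 y.2)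
      else 0)
    else charmatrix (blockCompanion m (n+1) c B) x y

lemma Emat_mul (hg : g = ∑ i : Fin (n+1), Polynomial.C (c i) * Polynomial.X ^ (i : ℕ)) :
    Emat m n * charmatrix (blockCompanion m (n+1) c B) = Mp m n c B g := by
  set T := blockCompanion m (n+1) c B with hTdef
  have hT : ∀ (x y : Fin (n+1) × Fin m), T x y =
      (if (y.1:ℕ) = n then c x.1 * B x.2 y.2
       else if (x.1:ℕ) = (y.1:ℕ)+1 then (if x.2 = y.2 then 1 else 0) else 0) := by
    intro x y
    rw [hTdef, blockCompanion]
    simp [Nat.add_sub_cancel]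
  have hchar : ∀ (x y : Fin (n+1) × Fin m), charmatrix T x y =
      (if x = y then X else 0) - C (T x y) := by
    intro x y
    rw [charmatrix_apply, Matrix.diagonal_apply]
  ext x y
  rw [Matrix.mul_apply]
  by_cases hx : x.1 = 0
  · simp only [Emat, Mp, if_pos hx]
    rw [Fintype.sum_prod_type]
    have hinner : ∀ z1 : Fin (n+1),
        (∑ z2 : Fin m, (if x.2 = z2 then (X:F[X]) ^ (z1:ℕ) else 0) * charmatrix T (z1,z2) y)
          = X ^ (z1:ℕ) * charmatrix T (z1, x.2) y := by
      intro z1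
      rw [Finset.sum_eq_single x.2]
      · rw [if_pos rfl]
      · intro z2 _ hz2
        rw [if_neg (fun h => hz2 h.symm), zero_mul]
      · intro h
        exact absurd (Finset.mem_univ _) h
    rw [Finset.sum_congr rfl (fun z1 _ => hinner z1)]
    have hsplit : (∑ z1 : Fin (n+1), X ^ (z1:ℕ) * charmatrix T (z1, x.2) y)
        = (∑ z1 : Fin (n+1), X ^ (z1:ℕ) * (if (z1, x.2) = y then (X:F[X]) else 0))
          - ∑ z1 : Fin (n+1), X ^ (z1:ℕ) * C (T (z1, x.2) y) := by
      rw [← Finset.sum_sub_distrib]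
      refine Finset.sum_congr rfl fun z1 _ => ?_
      rw [hchar, mul_sub]
    rw [hsplit]
    have hS1 : (∑ z1 : Fin (n+1), X ^ (z1:ℕ) * (if (z1, x.2) = y then (X:F[X]) else 0))
        = if x.2 = y.2 then X ^ ((y.1:ℕ)+1) else 0 := by
      rw [Finset.sum_eq_single y.1]
      · by_cases hl : x.2 = y.2
        · rw [if_pos hl, if_pos (show (y.1, x.2) = y by simp [hl]), pow_succ]
        · simp [Prod.ext_iff, hl]
      · intro z1 _ hz1
        simp [Prod.ext_iff, hz1]
      · intro h
        exact absurd (Finset.mem_univ _) h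
    rw [hS1]
    by_cases hy : (y.1:ℕ) = n
    · rw [if_pos hy]
      have hS2 : (∑ z1 : Fin (n+1), X ^ (z1:ℕ) * C (T (z1, x.2) y))
          = g * C (B x.2 y.2) := by
        rw [hg, Finset.sum_mul]
        refine Finset.sum_congr rfl fun z1 _ => ?_
        rw [hT, if_pos hy, _root_.map_mul]
        ring
      rw [hS2, hy]
      by_cases hl : x.2 = y.2
      · rw [if_pos hl, if_pos hl, mul_one]
      · rw [if_neg hl, if_neg hl, mul_zero, zero_sub]
    · rw [if_neg hy]
      have hylt : (y.1:ℕ) + 1 < n + 1 := by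
        have := y.1.isLt
        omega
      have hS2 : (∑ z1 : Fin (n+1), X ^ (z1:ℕ) * C (T (z1, x.2) y))
          = if x.2 = y.2 then X ^ ((y.1:ℕ)+1) else 0 := by
        rw [Finset.sum_eq_single (⟨(y.1:ℕ)+1, hylt⟩ : Fin (n+1))]
        · rw [hT, if_neg hy, if_pos rfl]
          by_cases hl : x.2 = y.2 <;> simp [hl]
        · intro z1 _ hz1
          rw [hT, if_neg hy, if_neg (fun h => hz1 (Fin.ext h)), map_zero, mul_zero]
        · intro h
          exact absurd (Finset.mem_univ _) h
      rw [hS2, sub_self]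
  · simp only [Emat, Mp, if_neg hx]
    rw [Finset.sum_eq_single x]
    · rw [if_pos rfl, one_mul]
    · intro z _ hz
      rw [if_neg (fun h => hz h.symm), zero_mul]
    · intro h
      exact absurd (Finset.mem_univ _) h

lemma Emat_det : (Emat m n (F := F)).det = 1 := by
  have hbt : (Emat m n (F := F)).BlockTriangular Prod.fst := by
    intro x y h
    have hx : x.1 ≠ 0 := by
      intro h0
      rw [h0] at h
      exact absurd h (by simp)
    have hxy : x ≠ y := fun hxy => by subst hxy; exact lt_irrefl _ h
    simp only [Emat, if_neg hx, if_neg hxy]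
  rw [hbt.det_fintype]
  refine Finset.prod_eq_one fun a _ => ?_
  have hb1 : (Emat m n (F := F)).toSquareBlock Prod.fst a = 1 := by
    ext x y
    have hx1 : (x : Fin (n+1) × Fin m).1 = a := x.2
    have hy1 : (y : Fin (n+1) × Fin m).1 = a := y.2
    have hxy : ((x : Fin (n+1) × Fin m) = y) ↔ x = y := Subtype.coe_injective.eq_iff
    have hxy2 : ((x : Fin (n+1) × Fin m).2 = (y : Fin (n+1) × Fin m).2) ↔ x = y := by
      rw [← hxy, Prod.ext_iff, hx1, hy1]
      simp
    by_cases ha : a = 0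
    · simp only [Matrix.toSquareBlock_def, Emat, Matrix.of_apply, hx1, hy1, ha, if_pos rfl,
        Fin.val_zero, pow_zero, Matrix.one_apply, hxy2]
      simp
    · rw [Matrix.toSquareBlock_def]
      simp only [Matrix.of_apply, Emat, hx1, if_neg ha, hxy, Matrix.one_apply]
  rw [hb1, Matrix.det_one]

def ρperm : Equiv.Perm (Fin (n+1) × Fin m) :=
  Equiv.prodCongrLeft (fun _ : Fin m => finRotate (n+1))

lemma rho_apply (x : Fin (n+1) × Fin m) : ρperm m n x = (x.1 + 1, x.2) := by
  simp [ρperm, Equiv.prodCongrLeft, finRotate_succ_apply]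

lemma Mp_perm_blockTriangular :
    ((Mp m n c B g).submatrix (ρperm m n) id).BlockTriangular Prod.fst := by
  intro x y h
  rw [Matrix.submatrix_apply, rho_apply, id_eq]
  have hlt : (y.1 : ℕ) < (x.1 : ℕ) := h
  by_cases hx : x.1 = Fin.last n
  · have h1 : x.1 + 1 = 0 := by rw [hx]; exact Fin.last_add_one n
    have hy : (y.1 : ℕ) ≠ n := by
      have := x.1.isLt
      have hxv : (x.1 : ℕ) = n := by rw [hx]; simp
      omega
    simp [Mp, h1, hy]
  · have hne : (x.1:ℕ) ≠ n := fun hh => hx (Fin.ext (by simp [hh]))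
    have hvx : (x.1 : ℕ) < n := by have := x.1.isLt; omega
    have hval : ((x.1 + 1 : Fin (n+1)) : ℕ) = (x.1:ℕ) + 1 := by
      rw [Fin.val_add_one, if_neg hx]
    have h1 : (x.1 + 1 : Fin (n+1)) ≠ 0 := by
      intro hh
      rw [Fin.ext_iff, hval] at hh
      simp at hh
    simp only [Mp, if_neg h1]
    have hpne : ((x.1 + 1 : Fin (n+1)), x.2) ≠ y := by
      intro hh
      have h2 : ((x.1 + 1 : Fin (n+1)) : ℕ) = (y.1 : ℕ) :=
        congrArg (fun p : Fin (n+1) × Fin m => ((p.1 : Fin (n+1)) : ℕ)) hh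
      rw [hval] at h2
      omega
    rw [charmatrix_apply_ne _ _ _ hpne]
    have hTzero : blockCompanion m (n+1) c B ((x.1 + 1 : Fin (n+1)), x.2) y = 0 := by
      rw [blockCompanion]
      have hyn : ¬((y.1:ℕ) = (n+1) - 1) := by omega
      rw [if_neg hyn, if_neg]
      rw [hval]
      omega
    rw [hTzero, map_zero, neg_zero]

/-- the canonical equivalence between a fiber of `Prod.fst` and `Fin m`. -/
def blkEquiv (a : Fin (n+1)) : {x : Fin (n+1) × Fin m // x.1 = a} ≃ Fin m where
  toFun x := (x : Fin (n+1) × Fin m).2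
  invFun k := ⟨(a, k), rfl⟩
  left_inv x := by
    obtain ⟨⟨x1, x2⟩, hx⟩ := x
    exact Subtype.ext (by simp at hx; simp [hx])
  right_inv k := rfl

lemma Mp_block_ne_last (a : Fin (n+1)) (ha : a ≠ Fin.last n) :
    ((Mp m n c B g).submatrix (ρperm m n) id).toSquareBlock Prod.fst a = -1 := by
  ext x y
  have hx1 : (x : Fin (n+1) × Fin m).1 = a := x.2
  have hy1 : (y : Fin (n+1) × Fin m).1 = a := y.2
  have hne : (a:ℕ) ≠ n := fun hh => ha (Fin.ext (by simp [hh]))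
  have hva : (a : ℕ) < n := by have := a.isLt; omega
  have hval : ((a + 1 : Fin (n+1)) : ℕ) = (a:ℕ) + 1 := by
    rw [Fin.val_add_one, if_neg ha]
  have h1 : (a + 1 : Fin (n+1)) ≠ 0 := by
    intro hh
    rw [Fin.ext_iff, hval] at hh
    simp at hh
  rw [Matrix.toSquareBlock_def]
  simp only [Matrix.of_apply, Matrix.submatrix_apply, rho_apply, id_eq, hx1]
  simp only [Mp, if_neg h1]
  have hpne : ((a + 1 : Fin (n+1)), (x : Fin (n+1) × Fin m).2) ≠ (y : Fin (n+1) × Fin m) := by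
    intro hh
    have h2 : ((a + 1 : Fin (n+1)) : ℕ) = ((y : Fin (n+1) × Fin m).1 : ℕ) :=
      congrArg (fun p : Fin (n+1) × Fin m => ((p.1 : Fin (n+1)) : ℕ)) hh
    rw [hval, hy1] at h2
    omega
  rw [charmatrix_apply_ne _ _ _ hpne]
  have hTval : blockCompanion m (n+1) c B ((a + 1 : Fin (n+1)), (x : Fin (n+1) × Fin m).2)
      (y : Fin (n+1) × Fin m)
      = (if (x : Fin (n+1) × Fin m).2 = (y : Fin (n+1) × Fin m).2 then 1 else 0) := by
    rw [blockCompanion]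
    have hyn : ¬(((y : Fin (n+1) × Fin m).1 : ℕ) = (n+1) - 1) := by rw [hy1]; omega
    rw [if_neg hyn, if_pos (by rw [hval, hy1])]
  rw [hTval]
  have hxy2 : ((x : Fin (n+1) × Fin m).2 = (y : Fin (n+1) × Fin m).2) ↔ x = y := by
    rw [← Subtype.coe_injective.eq_iff, Prod.ext_iff, hx1, hy1]
    simp
  by_cases hl : x = y
  · subst hl
    rw [if_pos (hxy2.mpr rfl), Matrix.neg_apply, Matrix.one_apply_eq]
    simp
  · rw [if_neg (fun hh => hl (hxy2.mp hh)), Matrix.neg_apply, Matrix.one_apply_ne hl]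
    simp

lemma Mp_block_last :
    (((Mp m n c B g).submatrix (ρperm m n) id).toSquareBlock Prod.fst (Fin.last n)).det
      = ((X : F[X]) ^ (n+1) • 1 - g • B.map C).det := by
  have he : ((Mp m n c B g).submatrix (ρperm m n) id).toSquareBlock Prod.fst (Fin.last n)
      = ((X : F[X]) ^ (n+1) • 1 - g • B.map C).submatrix
          (blkEquiv m n (Fin.last n)) (blkEquiv m n (Fin.last n)) := by
    ext x y
    have hx1 : (x : Fin (n+1) × Fin m).1 = Fin.last n := x.2
    have hy1 : (y : Fin (n+1) × Fin m).1 = Fin.last n := y.2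
    have h0 : (Fin.last n) + 1 = (0 : Fin (n+1)) := Fin.last_add_one n
    rw [Matrix.toSquareBlock_def]
    simp only [Matrix.of_apply, Matrix.submatrix_apply, rho_apply, id_eq, hx1, h0]
    simp only [Mp, if_pos rfl]
    have hyn : ((y : Fin (n+1) × Fin m).1 : ℕ) = n := by rw [hy1]; simp
    rw [if_pos hyn]
    have hxy2 : ((x : Fin (n+1) × Fin m).2 = (y : Fin (n+1) × Fin m).2) ↔
        (blkEquiv m n (Fin.last n) x = blkEquiv m n (Fin.last n) y) := Iff.rfl
    simp only [Matrix.sub_apply, Matrix.smul_apply, Matrix.map_apply, Matrix.one_apply,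
      blkEquiv, Equiv.coe_fn_mk, smul_eq_mul]
    simp
  rw [he, Matrix.det_submatrix_equiv_self]

lemma Mp_det :
    (Mp m n c B g).det = ((X : F[X]) ^ (n+1) • 1 - g • B.map C).det := by
  have hcard : ∀ a : Fin (n+1), Fintype.card {x : Fin (n+1) × Fin m // x.1 = a} = m :=
    fun a => (Fintype.card_congr (blkEquiv m n a)).trans (Fintype.card_fin m)
  have hsign := Matrix.det_permute (ρperm m n) (Mp m n c B g)
  have hbt := Mp_perm_blockTriangular m n c B g
  rw [hbt.det_fintype, Fin.prod_univ_castSucc] at hsign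
  have hprod : (∏ i : Fin n,
      (((Mp m n c B g).submatrix (ρperm m n) id).toSquareBlock Prod.fst
        (Fin.castSucc i)).det) = ((-1 : F[X]) ^ m) ^ n := by
    rw [Finset.prod_congr rfl (fun i _ => ?_), Finset.prod_const, Finset.card_univ,
      Fintype.card_fin]
    rw [Mp_block_ne_last m n c B g (Fin.castSucc i)
      (by simp [Fin.ext_iff, Fin.val_last]; omega)]
    rw [show (-1 : Matrix {x : Fin (n+1) × Fin m // x.1 = Fin.castSucc i}
        {x : Fin (n+1) × Fin m // x.1 = Fin.castSucc i} F[X]) = -(1:Matrix _ _ F[X]) from rfl,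
      Matrix.det_neg, Matrix.det_one, mul_one, hcard]
  rw [hprod, Mp_block_last] at hsign
  have hsv : ((Equiv.Perm.sign (ρperm m n) : ℤ) : F[X]) = ((-1 : F[X]) ^ n) ^ m := by
    have : Equiv.Perm.sign (ρperm m n) = ((-1) ^ n) ^ m := by
      rw [ρperm, Equiv.Perm.sign_prodCongrLeft]
      simp [sign_finRotate]
    rw [this]
    push_cast
    ring
  rw [hsv] at hsign
  have hcancel : ((-1 : F[X]) ^ n) ^ m * (((-1 : F[X]) ^ n) ^ m) = 1 := by
    rw [← mul_pow, ← mul_pow, neg_one_mul, neg_neg, one_pow, one_pow]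
  calc (Mp m n c B g).det
      = ((-1 : F[X]) ^ n) ^ m * (((-1 : F[X]) ^ n) ^ m * (Mp m n c B g).det) := by
        rw [← mul_assoc, hcancel, one_mul]
    _ = ((-1 : F[X]) ^ n) ^ m * (((-1 : F[X]) ^ m) ^ n
          * ((X : F[X]) ^ (n+1) • 1 - g • B.map C).det) := by rw [← hsign]
    _ = ((X : F[X]) ^ (n+1) • 1 - g • B.map C).det := by
        rw [← mul_assoc, ← pow_mul, ← pow_mul, mul_comm n m, ← pow_add,
          show m * n + m * n = 2 * (m * n) by ring, pow_mul, neg_one_sq, one_pow, one_mul]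

lemma key (hg : g = ∑ i : Fin (n+1), Polynomial.C (c i) * Polynomial.X ^ (i : ℕ)) :
    (blockCompanion m (n+1) c B).charpoly
      = ((X : F[X]) ^ (n+1) • (1 : Matrix (Fin m) (Fin m) F[X]) - g • B.map C).det := by
  rw [Matrix.charpoly]
  have h1 : (charmatrix (blockCompanion m (n+1) c B)).det
      = (Emat m n * charmatrix (blockCompanion m (n+1) c B)).det := by
    rw [Matrix.det_mul, Emat_det, one_mul]
  rw [h1, Emat_mul m n c B g hg, Mp_det]

end Aux

/-- Writing `ψ_B(X) = ∑ b_i X^i` for the characteristic polynomial of `B` and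
`g(X) = 1 + c_1 X + ⋯ + c_{n-1} X^{n-1}`, the characteristic polynomial of the
block companion matrix `T` (with `c 0 = 1`) equals
`∑_{i=0}^m b_i X^{n i} g(X)^{m-i}`. -/
theorem stmt4 (F : Type) [Field F] [Fintype F] (m n : ℕ) (hm : 0 < m) (hn : 0 < n)
    (c : Fin n → F) (hc0 : c ⟨0, hn⟩ = 1)
    (B : Matrix (Fin m) (Fin m) F) (hB : IsUnit B)
    (g : Polynomial F) (hg : g = ∑ i : Fin n, Polynomial.C (c i) * Polynomial.X ^ (i : ℕ)) :
    (blockCompanion m n c B).charpoly =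
      ∑ i ∈ Finset.range (m + 1),
        Polynomial.C (B.charpoly.coeff i) * Polynomial.X ^ (n * i) * g ^ (m - i) := by
  obtain ⟨n, rfl⟩ : ∃ n', n = n' + 1 := ⟨n - 1, (Nat.succ_pred_eq_of_pos hn).symm⟩
  have hgne : g ≠ 0 := by
    intro h
    have : g.coeff 0 = 1 := by
      rw [hg]
      rw [Polynomial.finset_sum_coeff]
      rw [Finset.sum_eq_single (0 : Fin (n+1))]
      · simpa using hc0
      · intro i _ hi
        have : (i : ℕ) ≠ 0 := fun hh => hi (Fin.ext hh)
        simp [Polynomial.coeff_X_pow, this, Ne.symm this]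
      · intro h
        exact absurd (Finset.mem_univ _) h
    rw [h] at this
    simp at this
  rw [key m n c B g hg, det_aux B _ _ hgne]
  refine Finset.sum_congr rfl fun i _ => ?_
  rw [← pow_mul]
end

section
/- Let q be a prime power and m, n positive integers. Let h(X) = ∑_{i=0}^m h_i X^i ∈ F_q[X] be monic of degree m and let g ∈ F_q[X] satisfy g(0) = 1 and deg g ≤ n−1. If the polynomial f(X) = ∑_{i=0}^m h_i · X^{n·i} · g(X)^{m−i} is irreducible over F_q, then h is irreducible over F_q. -/
open Polynomial

/-- If `h` is monic of degree `m`, `g(0) = 1`, `deg g ≤ n - 1`, and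
`f(X) = ∑ h_i X^{n i} g(X)^{m-i}` is irreducible over `F_q`, then `h` is
irreducible over `F_q`. -/
theorem stmt5 (F : Type) [Field F] [Fintype F] (m n : ℕ) (hm : 0 < m) (hn : 0 < n)
    (h g : Polynomial F) (hmonic : h.Monic) (hdeg : h.natDegree = m)
    (hg0 : Polynomial.eval 0 g = 1) (hgdeg : g.natDegree ≤ n - 1)
    (hirr : Irreducible (∑ i ∈ Finset.range (m + 1),
      Polynomial.C (h.coeff i) * Polynomial.X ^ (n * i) * g ^ (m - i))) :
    Irreducible h := by
  classical
  have hgne : g ≠ 0 := by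
    intro hg; rw [hg] at hg0; simp at hg0
  set K := RatFunc F
  set φ : Polynomial F →+* K := algebraMap (Polynomial F) K with hφ
  have hφinj : Function.Injective φ := RatFunc.algebraMap_injective F
  have hGne : φ g ≠ 0 := by
    intro h'
    exact hgne (hφinj (by simpa using h'))
  set u : K := φ X ^ n / φ g with hu
  -- key homomorphism identity
  have key : ∀ (p : Polynomial F) (k : ℕ), p.natDegree ≤ k →
      φ (∑ i ∈ Finset.range (k+1), C (p.coeff i) * X ^ (n*i) * g ^ (k-i))
        = φ g ^ k * Polynomial.aeval u p := by
    intro p k hp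
    rw [Polynomial.aeval_eq_sum_range' (Nat.lt_succ_of_le hp), map_sum, Finset.mul_sum]
    refine Finset.sum_congr rfl fun i hi => ?_
    rw [Finset.mem_range, Nat.lt_succ_iff] at hi
    rw [map_mul, map_mul, map_pow, map_pow, Algebra.smul_def,
      IsScalarTower.algebraMap_apply F (Polynomial F) K, Polynomial.algebraMap_eq]
    rw [show φ g ^ k = φ g ^ (k - i) * φ g ^ i from by
      rw [← pow_add, Nat.sub_add_cancel hi]]
    rw [hu, div_pow, pow_mul]
    rw [mul_div_assoc', mul_div_assoc', eq_div_iff (pow_ne_zero i hGne)]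
    ring
  -- degree/coefficient lemma
  have hcoeff : ∀ p : Polynomial F,
      (∑ i ∈ Finset.range (p.natDegree + 1),
        C (p.coeff i) * X ^ (n*i) * g ^ (p.natDegree - i)).coeff (n * p.natDegree)
        = p.coeff p.natDegree := by
    intro p
    rw [Polynomial.finset_sum_coeff, Finset.sum_eq_single p.natDegree]
    · simp [Nat.sub_self, Polynomial.coeff_C_mul, Polynomial.coeff_X_pow]
    · intro i hi hne
      rw [Finset.mem_range, Nat.lt_succ_iff] at hi
      have hilt : i < p.natDegree := lt_of_le_of_ne hi hne
      apply Polynomial.coeff_eq_zero_of_natDegree_lt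
      have h1 : (C (p.coeff i) * X ^ (n*i) * g ^ (p.natDegree - i)).natDegree
          ≤ n * i + g.natDegree * (p.natDegree - i) := by
        refine le_trans (Polynomial.natDegree_mul_le) ?_
        gcongr
        · refine le_trans (Polynomial.natDegree_mul_le) ?_
          simp
        · rw [Polynomial.natDegree_pow, Nat.mul_comm]
      refine lt_of_le_of_lt h1 ?_
      have ht1 : 1 ≤ p.natDegree - i := by omega
      have hd1 : g.natDegree + 1 ≤ n := by omega
      have h2 : (g.natDegree + 1) * (p.natDegree - i) ≤ n * (p.natDegree - i) :=
        Nat.mul_le_mul_right _ hd1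
      have h3 : n * i + n * (p.natDegree - i) = n * p.natDegree := by
        rw [← Nat.mul_add, Nat.add_sub_cancel' hi]
      nlinarith [Nat.mul_le_mul_right (p.natDegree - i) hd1]
    · intro hmem
      simp at hmem
  -- nonunit nonzero polys have positive degree
  have posdeg : ∀ p : Polynomial F, p ≠ 0 → ¬ IsUnit p → 0 < p.natDegree := by
    intro p hp0 hpu
    rcases Nat.eq_zero_or_pos p.natDegree with h0 | h1
    · exfalso
      apply hpu
      rw [Polynomial.eq_C_of_natDegree_eq_zero h0]
      exact Polynomial.isUnit_C.mpr (isUnit_iff_ne_zero.mpr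
        (by intro hc; apply hp0; rw [Polynomial.eq_C_of_natDegree_eq_zero h0, hc, map_zero]))
    · exact h1
  constructor
  · intro hu
    have := Polynomial.natDegree_eq_zero_of_isUnit hu
    omega
  · intro a b hab
    by_contra hc
    push_neg at hc
    obtain ⟨hua, hub⟩ := hc
    have hhne : h ≠ 0 := hmonic.ne_zero
    have ha0 : a ≠ 0 := by rintro rfl; exact hhne (by rw [hab, zero_mul])
    have hb0 : b ≠ 0 := by rintro rfl; exact hhne (by rw [hab, mul_zero])
    have hklm : a.natDegree + b.natDegree = m := by
      rw [← hdeg, hab, Polynomial.natDegree_mul ha0 hb0]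
    have hka : 0 < a.natDegree := posdeg a ha0 hua
    have hkb : 0 < b.natDegree := posdeg b hb0 hub
    set A := ∑ i ∈ Finset.range (a.natDegree + 1),
      C (a.coeff i) * X ^ (n*i) * g ^ (a.natDegree - i) with hA
    set B := ∑ i ∈ Finset.range (b.natDegree + 1),
      C (b.coeff i) * X ^ (n*i) * g ^ (b.natDegree - i) with hB
    have hfeq : (∑ i ∈ Finset.range (m + 1), C (h.coeff i) * X ^ (n * i) * g ^ (m - i))
        = A * B := by
      apply hφinj
      rw [map_mul, key h m hdeg.le, key a a.natDegree le_rfl, key b b.natDegree le_rfl,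
        hab, map_mul, ← hklm, pow_add]
      ring
    have hAcoeff : A.coeff (n * a.natDegree) ≠ 0 := by
      rw [hA, hcoeff a]
      exact Polynomial.leadingCoeff_ne_zero.mpr ha0
    have hBcoeff : B.coeff (n * b.natDegree) ≠ 0 := by
      rw [hB, hcoeff b]
      exact Polynomial.leadingCoeff_ne_zero.mpr hb0
    rcases hirr.isUnit_or_isUnit hfeq with hAu | hBu
    · have h0 := Polynomial.natDegree_eq_zero_of_isUnit hAu
      have := Polynomial.le_natDegree_of_ne_zero hAcoeff
      have : n * a.natDegree = 0 := by omega
      rcases Nat.mul_eq_zero.mp this with h' | h' <;> omega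
    · have h0 := Polynomial.natDegree_eq_zero_of_isUnit hBu
      have := Polynomial.le_natDegree_of_ne_zero hBcoeff
      have : n * b.natDegree = 0 := by omega
      rcases Nat.mul_eq_zero.mp this with h' | h' <;> omega
end

section
/- Let q be a prime power, m a positive integer, and p(X) ∈ F_q[X] a monic irreducible polynomial of degree m. Then the number of matrices A ∈ M_m(F_q) whose characteristic polynomial det(X·I_m − A) equals p(X) is ∏_{i=1}^{m−1}(q^m − q^i). -/
set_option maxHeartbeats 1000000

open Polynomial

section Aux

variable {F : Type} [Field F] [Fintype F] {m : ℕ}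

theorem aux_count (hm : 0 < m) (p : Polynomial F) (hmonic : p.Monic) (hdeg : p.natDegree = m)
    (hirr : Irreducible p) :
    Nat.card {A : Matrix (Fin m) (Fin m) F // A.charpoly = p} *
      Nat.card (AdjoinRoot p)ˣ = Nat.card ((Fin m → F) ≃ₗ[F] AdjoinRoot p) := by
  classical
  have hp0 : p ≠ 0 := hmonic.ne_zero
  haveI : Fact (Irreducible p) := ⟨hirr⟩
  set K := AdjoinRoot p with hK
  set pb : PowerBasis F K := AdjoinRoot.powerBasis hp0 with hpb
  haveI : Module.Finite F K := pb.finite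
  -- multiplication by the root as an endomorphism
  set L : Module.End F K := Algebra.lmul F K (AdjoinRoot.root p) with hL
  have hgen : pb.gen = AdjoinRoot.root p := rfl
  have charL : LinearMap.charpoly L = p := by
    rw [← LinearMap.charpoly_toMatrix L pb.basis]
    have h1 : LinearMap.toMatrix pb.basis pb.basis L = Algebra.leftMulMatrix pb.basis pb.gen := rfl
    rw [h1, charpoly_leftMulMatrix, hgen, AdjoinRoot.minpoly_root hp0,
      hmonic.leadingCoeff, inv_one, map_one, mul_one]
  -- multiplication by a unit as an F-linear equiv of K
  let mulE : Kˣ → (K ≃ₗ[F] K) := fun c =>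
    LinearEquiv.ofLinear (Algebra.lmul F K (c : K)) (Algebra.lmul F K ((c⁻¹ : Kˣ) : K))
      (by ext x; simp [← mul_assoc])
      (by ext x; simp [← mul_assoc])
  have mulE_apply : ∀ (c : Kˣ) (x : K), mulE c x = (c : K) * x := fun c x => rfl
  have mulE_symm_apply : ∀ (c : Kˣ) (x : K), (mulE c).symm x = ((c⁻¹ : Kˣ) : K) * x :=
    fun c x => rfl
  have L_apply : ∀ x : K, L x = AdjoinRoot.root p * x := fun x => rfl
  -- the map from linear equivs to matrices
  set Ψ : ((Fin m → F) ≃ₗ[F] K) → Matrix (Fin m) (Fin m) F := fun e =>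
    LinearMap.toMatrix' (e.symm.conj L) with hΨ
  have hcp : ∀ e, (Ψ e).charpoly = p := by
    intro e
    have h2 : Ψ e = LinearMap.toMatrix (Pi.basisFun F (Fin m)) (Pi.basisFun F (Fin m))
        (e.symm.conj L) := by rw [LinearMap.toMatrix_eq_toMatrix']
    rw [h2, LinearMap.charpoly_toMatrix, LinearEquiv.charpoly_conj, charL]
  set Ψ' : ((Fin m → F) ≃ₗ[F] K) → {A : Matrix (Fin m) (Fin m) F // A.charpoly = p} :=
    fun e => ⟨Ψ e, hcp e⟩ with hΨ'
  -- commuting with L forces being multiplication by a unit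
  have key : ∀ u : K ≃ₗ[F] K, ((u : K →ₗ[F] K) ∘ₗ L = L ∘ₗ (u : K →ₗ[F] K)) →
      ∃ c : Kˣ, ∀ x : K, u x = x * (c : K) := by
    intro u hu
    have hcomm : ∀ z x : K, u (z * x) = z * u x := by
      intro z
      have hz : z ∈ Algebra.adjoin F ({AdjoinRoot.root p} : Set K) := by
        rw [AdjoinRoot.adjoinRoot_eq_top]; trivial
      induction hz using Algebra.adjoin_induction with
      | mem w hw =>
        rcases hw with rfl
        intro x
        have := congrArg (fun g : K →ₗ[F] K => g x) hu
        simpa [hL] using this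
      | algebraMap r =>
        intro x
        rw [← Algebra.smul_def, map_smul, Algebra.smul_def]
      | add y z hy hz ihy ihz =>
        intro x
        rw [add_mul, map_add, ihy x, ihz x, ← add_mul]
      | mul y z hy hz ihy ihz =>
        intro x
        rw [mul_assoc, ihy, ihz, mul_assoc]
    have hc0 : u 1 ≠ 0 := by
      intro h
      have : (1 : K) = 0 := by
        apply u.injective
        simpa using h
      exact one_ne_zero this
    refine ⟨Units.mk0 (u 1) hc0, fun x => ?_⟩
    have := hcomm x 1
    rw [mul_one] at this
    simpa [Units.mk0] using this
  -- surjectivity of Ψ'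
  have hsurj : Function.Surjective Ψ' := by
    rintro ⟨A, hA⟩
    have hroot : Polynomial.aeval A p = 0 := by rw [← hA]; exact A.aeval_self_charpoly
    set f : Module.End F (Fin m → F) := Matrix.toLinAlgEquiv' A with hf
    have hfp : Polynomial.aeval f p = 0 := by
      rw [hf, show (Matrix.toLinAlgEquiv' A : Module.End F (Fin m → F)) =
        (Matrix.toLinAlgEquiv' : Matrix (Fin m) (Fin m) F ≃ₐ[F] _).toAlgHom A from rfl,
        Polynomial.aeval_algHom_apply, hroot, map_zero]
    let ρ₀ : Polynomial F →ₐ[F] Module.End F (Fin m → F) := Polynomial.aeval f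
    have hker : ∀ g ∈ Ideal.span ({p} : Set (Polynomial F)), ρ₀.toRingHom g = 0 := by
      intro g hg
      obtain ⟨y, rfl⟩ := Ideal.mem_span_singleton'.1 hg
      simp only [AlgHom.toRingHom_eq_coe, RingHom.coe_coe, map_mul, ρ₀]
      rw [hfp, mul_zero]
    let ρ : K →+* Module.End F (Fin m → F) := Ideal.Quotient.lift _ ρ₀.toRingHom hker
    have hρmk : ∀ g : Polynomial F, ρ (AdjoinRoot.mk p g) = Polynomial.aeval f g :=
      fun g => Ideal.Quotient.lift_mk _ _ _
    letI : Module K (Fin m → F) := Module.compHom _ ρ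
    haveI : IsScalarTower F K (Fin m → F) := by
      constructor
      intro a k v
      show ρ (a • k) v = a • (ρ k v)
      rw [Algebra.smul_def, map_mul]
      have h1 : ρ (algebraMap F K a) = algebraMap F (Module.End F (Fin m → F)) a := by
        have h0 : algebraMap F K a = AdjoinRoot.mk p (Polynomial.C a) := rfl
        rw [h0, hρmk, Polynomial.aeval_C]
      rw [h1, Module.End.mul_apply, Module.algebraMap_end_apply]
    haveI : FiniteDimensional K (Fin m → F) := FiniteDimensional.right F K (Fin m → F)
    have hr : Module.finrank K (Fin m → F) = 1 := by
      have h3 := Module.finrank_mul_finrank F K (Fin m → F)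
      have h4 : Module.finrank F K = m := by
        rw [pb.finrank]
        exact hdeg
      have h5 : Module.finrank F (Fin m → F) = m := by
        rw [Module.finrank_fintype_fun_eq_card, Fintype.card_fin]
      rw [h4, h5] at h3
      exact Nat.eq_of_mul_eq_mul_left hm (by rw [h3, mul_one])
    obtain ⟨b⟩ := (finrank_eq_one_iff (Fin 1)).1 hr
    let eK : (Fin m → F) ≃ₗ[K] K := b.equiv (Module.Basis.singleton (Fin 1) K) (Equiv.refl _)
    let e : (Fin m → F) ≃ₗ[F] K := eK.restrictScalars F
    refine ⟨e, Subtype.ext ?_⟩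
    show Ψ e = A
    have hconj : e.symm.conj L = f := by
      apply LinearMap.ext
      intro v
      rw [LinearEquiv.conj_apply_apply, LinearEquiv.symm_symm]
      have h6 : e.symm (AdjoinRoot.root p * e v) = AdjoinRoot.root p • v := by
        show eK.symm (AdjoinRoot.root p • eK v) = AdjoinRoot.root p • v
        rw [map_smul, eK.symm_apply_apply]
      rw [show L (e v) = AdjoinRoot.root p * e v from rfl, h6]
      show ρ (AdjoinRoot.root p) v = f v
      have h7 : AdjoinRoot.root p = AdjoinRoot.mk p Polynomial.X := rfl
      rw [h7, hρmk, Polynomial.aeval_X]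
    rw [hΨ]
    show LinearMap.toMatrix' (e.symm.conj L) = A
    rw [hconj, hf]
    exact LinearMap.toMatrix'_toLin' A
  -- the Kˣ-action does not change Ψ'
  have hΨmul0 : ∀ (e : (Fin m → F) ≃ₗ[F] K) (c : Kˣ), Ψ (e.trans (mulE c)) = Ψ e := by
    intro e c
    simp only [hΨ]
    have hc : (e.trans (mulE c)).symm.conj L = e.symm.conj L := by
      apply LinearMap.ext
      intro v
      rw [LinearEquiv.conj_apply_apply, LinearEquiv.conj_apply_apply,
        LinearEquiv.symm_symm, LinearEquiv.symm_symm, LinearEquiv.trans_apply,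
        LinearEquiv.symm_trans_apply]
      rw [mulE_apply, L_apply, L_apply, mulE_symm_apply]
      congr 1
      rw [mul_left_comm ((c⁻¹ : Kˣ) : K), ← mul_assoc ((c⁻¹ : Kˣ) : K), Units.inv_mul, one_mul]
    exact congrArg LinearMap.toMatrix' hc
  have hΨmul : ∀ (e : (Fin m → F) ≃ₗ[F] K) (c : Kˣ), Ψ' (e.trans (mulE c)) = Ψ' e :=
    fun e c => Subtype.ext (hΨmul0 e c)
  -- build the bijection {charpoly = p} × Kˣ ≃ linear equivs
  let sec := Function.surjInv hsurj
  have hsec : ∀ s, Ψ' (sec s) = s := fun s => Function.surjInv_eq hsurj s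
  let Θ : ({A : Matrix (Fin m) (Fin m) F // A.charpoly = p} × Kˣ) → ((Fin m → F) ≃ₗ[F] K) :=
    fun sc => (sec sc.1).trans (mulE sc.2)
  have hΘval : ∀ s c, Ψ' (Θ (s, c)) = s := by
    intro s c
    show Ψ' ((sec s).trans (mulE c)) = s
    rw [hΨmul, hsec]
  have hΘ : Function.Bijective Θ := by
    constructor
    · rintro ⟨s, c⟩ ⟨s', c'⟩ h
      have h1 : s = s' := by
        have h2 := congrArg Ψ' h
        rwa [hΘval, hΘval] at h2
      subst h1
      have h2 : (c : K) = (c' : K) := by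
        have h3 := congrArg (fun E : (Fin m → F) ≃ₗ[F] K => E ((sec s).symm 1)) h
        have h4 : ∀ d : Kˣ, Θ (s, d) ((sec s).symm 1) = (d : K) := by
          intro d
          show ((sec s).trans (mulE d)) ((sec s).symm 1) = (d : K)
          rw [LinearEquiv.trans_apply, LinearEquiv.apply_symm_apply, mulE_apply, mul_one]
        have h3' : Θ (s, c) ((sec s).symm 1) = Θ (s, c') ((sec s).symm 1) := h3
        rwa [h4, h4] at h3'
      exact Prod.ext rfl (Units.ext h2)
    · intro e
      have hΨe : Ψ (sec (Ψ' e)) = Ψ e := congrArg Subtype.val (hsec (Ψ' e))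
      simp only [hΨ] at hΨe
      have hconj : (sec (Ψ' e)).symm.conj L = e.symm.conj L :=
        LinearMap.toMatrix'.injective hΨe
      set e₀ := sec (Ψ' e) with he₀
      let u : K ≃ₗ[F] K := e₀.symm.trans e
      have hu : (u : K →ₗ[F] K) ∘ₗ L = L ∘ₗ (u : K →ₗ[F] K) := by
        apply LinearMap.ext
        intro x
        have h8 := congrArg (fun g : Module.End F (Fin m → F) => e (g (e₀.symm x))) hconj
        simp only [LinearEquiv.conj_apply_apply, LinearEquiv.symm_symm,
          LinearEquiv.apply_symm_apply] at h8
        show e (e₀.symm (L x)) = L (e (e₀.symm x))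
        rw [← h8]
      obtain ⟨c, hc⟩ := key u hu
      refine ⟨(Ψ' e, c), ?_⟩
      show e₀.trans (mulE c) = e
      apply LinearEquiv.toLinearMap_injective
      apply LinearMap.ext
      intro v
      show (mulE c) (e₀ v) = e v
      rw [mulE_apply, mul_comm]
      have h10 := hc (e₀ v)
      have h11 : u (e₀ v) = e v := by
        show e (e₀.symm (e₀ v)) = e v
        rw [LinearEquiv.symm_apply_apply]
      rw [h11] at h10
      exact h10.symm
  calc Nat.card {A : Matrix (Fin m) (Fin m) F // A.charpoly = p} * Nat.card Kˣ
      = Nat.card ({A : Matrix (Fin m) (Fin m) F // A.charpoly = p} × Kˣ) :=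
        (Nat.card_prod _ _).symm
    _ = Nat.card ((Fin m → F) ≃ₗ[F] K) := Nat.card_eq_of_bijective Θ hΘ

end Aux

/-- For a monic irreducible polynomial `p` of degree `m` over `F_q`, the number
of `m × m` matrices over `F_q` with characteristic polynomial `p` is
`∏_{i=1}^{m-1} (q^m - q^i)`. -/
theorem stmt6 (F : Type) [Field F] [Fintype F] (m : ℕ) (hm : 0 < m)
    (p : Polynomial F) (hmonic : p.Monic) (hdeg : p.natDegree = m)
    (hirr : Irreducible p) :
    Nat.card {A : Matrix (Fin m) (Fin m) F // A.charpoly = p} =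
      ∏ i ∈ Finset.Ico 1 m, (Fintype.card F ^ m - Fintype.card F ^ i) := by
  classical
  haveI : Fact (Irreducible p) := ⟨hirr⟩
  have hp0 : p ≠ 0 := hmonic.ne_zero
  set q := Fintype.card F with hq
  set K := AdjoinRoot p with hK
  haveI : Module.Finite F K := (AdjoinRoot.powerBasis hp0).finite
  haveI : Finite K := Module.finite_of_finite F
  letI : Fintype K := Fintype.ofFinite K
  have hfr : Module.finrank F K = m := by
    rw [(AdjoinRoot.powerBasis hp0).finrank]
    exact hdeg
  have hcardK : Fintype.card K = q ^ m := by
    rw [Module.card_eq_pow_finrank (K := F) (V := K), hfr]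
  have hcardKu : Nat.card Kˣ = q ^ m - 1 := by
    rw [Nat.card_eq_fintype_card, Fintype.card_units, hcardK]
  -- card of equivs = card GL
  let ι : K ≃ₗ[F] (Fin m → F) :=
    (AdjoinRoot.powerBasis hp0).basis.equiv (Pi.basisFun F (Fin m)) (finCongr hdeg)
  have hE : Nat.card ((Fin m → F) ≃ₗ[F] K) = Nat.card ((Fin m → F) ≃ₗ[F] (Fin m → F)) :=
    Nat.card_congr ⟨fun e => e.trans ι, fun g => g.trans ι.symm,
      fun e => by apply LinearEquiv.toLinearMap_injective; apply LinearMap.ext; intro v; simp,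
      fun g => by apply LinearEquiv.toLinearMap_injective; apply LinearMap.ext; intro v; simp⟩
  have hGL : Nat.card ((Fin m → F) ≃ₗ[F] (Fin m → F)) = Nat.card (GL (Fin m) F) :=
    (Nat.card_congr ((Matrix.GeneralLinearGroup.toLin.trans
      (LinearMap.GeneralLinearGroup.generalLinearEquiv F (Fin m → F))).toEquiv)).symm
  have hGLcard : Nat.card (GL (Fin m) F) = ∏ i : Fin m, (q ^ m - q ^ (i : ℕ)) :=
    Matrix.card_GL_field m
  have hmain := aux_count hm p hmonic hdeg hirr
  rw [hE, hGL, hGLcard, hcardKu] at hmain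
  have hsplit : ∏ i : Fin m, (q ^ m - q ^ (i : ℕ)) =
      (q ^ m - 1) * ∏ i ∈ Finset.Ico 1 m, (q ^ m - q ^ i) := by
    rw [Fin.prod_univ_eq_prod_range (fun i => q ^ m - q ^ i) m,
      Finset.range_eq_Ico, Finset.prod_eq_prod_Ico_succ_bot hm, pow_zero]
  rw [hsplit] at hmain
  have hpos : 0 < q ^ m - 1 := by
    have h2 : 1 < q := Fintype.one_lt_card
    have h3 : q ≤ q ^ m := Nat.le_self_pow hm.ne' q
    omega
  rw [mul_comm] at hmain
  exact Nat.eq_of_mul_eq_mul_left hpos hmain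
end

section
/- Let q be a prime power and m > 1 an integer. Let S be the set of polynomials f ∈ F_q[X] that are irreducible over F_q and can be written as f(X) = ∑_{i=0}^m h_i · X^{2i} · (aX+1)^{m−i} for some a ∈ F_q and some monic polynomial h(X) = ∑_{i=0}^m h_iX^i ∈ F_q[X] of degree m. Then: 2m·|S| = q·(q^m − 1) if q is odd and m = 2^ℓ for some ℓ ≥ 1; 2m·|S| = q·∑_{d | m, d odd} μ(d)·q^{m/d} if q is odd and m = 2^ℓ·k with k ≥ 3 odd; and 2m·|S| = (q−1)·∑_{d | m, d odd} μ(d)·q^{m/d} if q is even; where μ is the Möbius function. -/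
noncomputable section
open Polynomial IntermediateField

namespace Stmt10Aux

variable (F : Type) [Field F] [Fintype F]

abbrev AC := AlgebraicClosure F

lemma one_lt_q : 1 < Fintype.card F := Fintype.one_lt_card

lemma exists_char : ∃ p s : ℕ, p.Prime ∧ 0 < s ∧ Fintype.card F = p ^ s ∧
    CharP F p ∧ CharP (AC F) p := by
  obtain ⟨p, hchar⟩ := CharP.exists F
  haveI := hchar
  obtain ⟨⟨s, hs⟩, hp, hcard⟩ := FiniteField.card F p
  exact ⟨p, s, hp, hs, hcard, hchar,
    charP_of_injective_algebraMap (algebraMap F (AC F)).injective p⟩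

lemma frobQ_add (e : ℕ) (x y : AC F) :
    (x + y) ^ Fintype.card F ^ e = x ^ Fintype.card F ^ e + y ^ Fintype.card F ^ e := by
  obtain ⟨p, s, hp, hs, hcard, _, hchar⟩ := exists_char F
  haveI := hchar; haveI : Fact p.Prime := ⟨hp⟩
  rw [hcard, ← pow_mul, add_pow_char_pow, pow_mul]

lemma frobQ_neg_one (e : ℕ) : ((-1 : AC F)) ^ Fintype.card F ^ e = -1 := by
  obtain ⟨p, s, hp, hs, hcard, _, hchar⟩ := exists_char F
  haveI := hchar; haveI : Fact p.Prime := ⟨hp⟩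
  rw [hcard, ← pow_mul, neg_one_pow_char_pow]

lemma frobQ_neg (e : ℕ) (x : AC F) :
    (-x) ^ Fintype.card F ^ e = -(x ^ Fintype.card F ^ e) := by
  rw [neg_eq_neg_one_mul, mul_pow, frobQ_neg_one, neg_one_mul]

lemma frobQ_sub (e : ℕ) (x y : AC F) :
    (x - y) ^ Fintype.card F ^ e = x ^ Fintype.card F ^ e - y ^ Fintype.card F ^ e := by
  rw [sub_eq_add_neg, frobQ_add, frobQ_neg, sub_eq_add_neg]

lemma frobQ_algebraMap (e : ℕ) (a : F) :
    (algebraMap F (AC F) a) ^ Fintype.card F ^ e = algebraMap F (AC F) a := by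
  rw [← map_pow, FiniteField.pow_card_pow]

lemma frobQ_frobQ (e f : ℕ) (x : AC F) :
    (x ^ Fintype.card F ^ e) ^ Fintype.card F ^ f = x ^ Fintype.card F ^ (e + f) := by
  rw [← pow_mul, pow_add]

def Esub (e : ℕ) : Subfield (AC F) :=
  { carrier := {x | x ^ Fintype.card F ^ e = x}
    mul_mem' := by
      intro a b ha hb
      simp only [Set.mem_setOf_eq, mul_pow] at *
      rw [ha, hb]
    one_mem' := one_pow _
    add_mem' := by
      intro a b ha hb
      simp only [Set.mem_setOf_eq] at *
      rw [frobQ_add, ha, hb]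
    zero_mem' := zero_pow (by have := one_lt_q F; positivity)
    neg_mem' := by
      intro a ha
      simp only [Set.mem_setOf_eq] at *
      rw [frobQ_neg, ha]
    inv_mem' := by
      intro a ha
      simp only [Set.mem_setOf_eq] at *
      rw [inv_pow, ha] }

lemma mem_Esub {e : ℕ} {x : AC F} : x ∈ Esub F e ↔ x ^ Fintype.card F ^ e = x := Iff.rfl

lemma card_Esub (e : ℕ) (he : e ≠ 0) :
    Nat.card {x : AC F // x ^ Fintype.card F ^ e = x} = Fintype.card F ^ e := by
  have h1 : 1 < Fintype.card F := one_lt_q F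
  set P : F[X] := X ^ Fintype.card F ^ e - X with hP
  have hsep : P.Separable := by
    obtain ⟨p, s, hp, hs, hcard, hcharF, _⟩ := exists_char F
    haveI := hcharF
    have hdvd : p ∣ Fintype.card F ^ e :=
      dvd_pow (hcard ▸ dvd_pow_self p hs.ne') he
    exact galois_poly_separable p _ hdvd
  have hndeg : P.natDegree = Fintype.card F ^ e :=
    FiniteField.X_pow_card_pow_sub_X_natDegree_eq F he h1
  have hne : P ≠ 0 := FiniteField.X_pow_card_pow_sub_X_ne_zero F he h1
  have hsplit : Splits (P.map (algebraMap F (AC F))) := IsAlgClosed.splits _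
  have hmem : ∀ x : AC F, x ∈ P.rootSet (AC F) ↔ x ^ Fintype.card F ^ e = x := by
    intro x
    rw [mem_rootSet]
    simp only [hP, map_sub, aeval_X_pow, aeval_X, sub_eq_zero]
    exact ⟨fun h => h.2, fun h => ⟨hne, h⟩⟩
  calc Nat.card {x : AC F // x ^ Fintype.card F ^ e = x}
      = Nat.card (P.rootSet (AC F)) :=
        Nat.card_congr (Equiv.subtypeEquivRight fun x => (hmem x).symm)
    _ = Fintype.card (P.rootSet (AC F)) := Nat.card_eq_fintype_card
    _ = P.natDegree := card_rootSet_eq_natDegree hsep hsplit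
    _ = Fintype.card F ^ e := hndeg

lemma finite_Esub (e : ℕ) (he : e ≠ 0) : Finite {x : AC F // x ^ Fintype.card F ^ e = x} := by
  by_contra h
  rw [not_finite_iff_infinite] at h
  have := card_Esub F e he
  rw [Nat.card_eq_zero_of_infinite] at this
  have h1 : 1 < Fintype.card F := one_lt_q F
  have : (0:ℕ) < Fintype.card F ^ e := by positivity
  omega

lemma isInt (x : AC F) : IsIntegral F x :=
  IsAlgebraic.isIntegral (Algebra.IsAlgebraic.isAlgebraic x)

lemma card_adjoin (x : AC F) :
    Nat.card F⟮x⟯ = Fintype.card F ^ (minpoly F x).natDegree := by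
  have hint := isInt F x
  haveI := adjoin.finiteDimensional hint
  have hrk := adjoin.finrank hint
  let b := Module.finBasis F F⟮x⟯
  rw [← hrk]
  calc Nat.card F⟮x⟯ = Nat.card (Fin (Module.finrank F F⟮x⟯) → F) :=
        Nat.card_congr b.equivFun.toEquiv
    _ = Fintype.card F ^ Module.finrank F F⟮x⟯ := by
        rw [Nat.card_fun, Nat.card_eq_fintype_card, Nat.card_eq_fintype_card,
          Fintype.card_fin]

lemma finite_adjoin (x : AC F) : Finite F⟮x⟯ := by
  have hcard := card_adjoin F x
  have h1 : 1 < Fintype.card F := one_lt_q F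
  have hpos : 0 < Nat.card F⟮x⟯ := by rw [hcard]; positivity
  exact (Nat.card_pos_iff.mp hpos).2

lemma pow_q_pow_of_deg_dvd {x : AC F} {n : ℕ} (h : (minpoly F x).natDegree ∣ n) :
    x ^ Fintype.card F ^ n = x := by
  obtain ⟨k, rfl⟩ := h
  set d := (minpoly F x).natDegree with hd
  haveI : Finite F⟮x⟯ := finite_adjoin F x
  haveI : Fintype F⟮x⟯ := Fintype.ofFinite _
  have hcard : Fintype.card F⟮x⟯ = Fintype.card F ^ d := by
    rw [← Nat.card_eq_fintype_card, card_adjoin]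
  set y : F⟮x⟯ := AdjoinSimple.gen F x with hy
  have h2 : y ^ (Fintype.card F ^ d) ^ k = y := by
    rw [← hcard]; exact FiniteField.pow_card_pow k y
  have h3 := congrArg (algebraMap F⟮x⟯ (AC F)) h2
  rw [map_pow, AdjoinSimple.algebraMap_gen] at h3
  rw [pow_mul]
  exact h3

lemma mem_Einter {e : ℕ} {x : AC F} :
    x ∈ (Esub F e).toIntermediateField (fun a => frobQ_algebraMap F e a) ↔
      x ^ Fintype.card F ^ e = x := Iff.rfl

def Einter (e : ℕ) : IntermediateField F (AC F) :=
  (Esub F e).toIntermediateField (fun a => frobQ_algebraMap F e a)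

lemma mem_Einter' {e : ℕ} {x : AC F} :
    x ∈ Einter F e ↔ x ^ Fintype.card F ^ e = x := Iff.rfl

lemma deg_le_of_pow_eq {x : AC F} {r : ℕ} (hr : r ≠ 0) (h : x ^ Fintype.card F ^ r = x) :
    (minpoly F x).natDegree ≤ r := by
  have hle : F⟮x⟯ ≤ Einter F r := adjoin_simple_le_iff.mpr (mem_Einter' F |>.mpr h)
  haveI : Finite (Einter F r) := by
    have : Finite {y : AC F // y ^ Fintype.card F ^ r = y} := finite_Esub F r hr
    exact Finite.of_equiv _ (Equiv.subtypeEquivRight fun y =>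
      (mem_Einter' F (e := r) (x := y)).symm)
  have hinj : Nat.card F⟮x⟯ ≤ Nat.card (Einter F r) :=
    Nat.card_le_card_of_injective (IntermediateField.inclusion hle)
      (IntermediateField.inclusion hle).injective
  have hc1 := card_adjoin F x
  have hc2 : Nat.card (Einter F r) = Fintype.card F ^ r := by
    rw [Nat.card_congr (Equiv.subtypeEquivRight fun y =>
      (mem_Einter' F (e := r) (x := y)))]
    exact card_Esub F r hr
  rw [hc1, hc2] at hinj
  exact (Nat.pow_le_pow_iff_right (one_lt_q F)).mp hinj

lemma pow_q_eq_iff (x : AC F) (n : ℕ) :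
    x ^ Fintype.card F ^ n = x ↔ (minpoly F x).natDegree ∣ n := by
  constructor
  · intro h
    set d := (minpoly F x).natDegree with hd
    have hd0 : 0 < d := minpoly.natDegree_pos (isInt F x)
    have h1 : x ^ Fintype.card F ^ (d * (n / d)) = x :=
      pow_q_pow_of_deg_dvd F (Dvd.intro _ rfl)
    have hmod : x ^ Fintype.card F ^ (n % d) = x := by
      calc x ^ Fintype.card F ^ (n % d)
          = (x ^ Fintype.card F ^ (d * (n / d))) ^ Fintype.card F ^ (n % d) := by rw [h1]
        _ = x ^ Fintype.card F ^ (d * (n / d) + n % d) := frobQ_frobQ F _ _ x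
        _ = x ^ Fintype.card F ^ n := by rw [Nat.div_add_mod]
        _ = x := h
    rcases Nat.eq_zero_or_pos (n % d) with he | he
    · exact Nat.dvd_of_mod_eq_zero he
    · have h2 := deg_le_of_pow_eq F he.ne' hmod
      have h3 := Nat.mod_lt n hd0
      omega
  · exact pow_q_pow_of_deg_dvd F

lemma deg_zero : (minpoly F (0 : AC F)).natDegree = 1 := by
  rw [minpoly.zero, natDegree_X]

lemma minpoly_natDegree_inv (x : AC F) (hx : x ≠ 0) :
    (minpoly F x⁻¹).natDegree = (minpoly F x).natDegree := by
  have h1 : F⟮x⁻¹⟯ = F⟮x⟯ := by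
    apply le_antisymm
    · exact adjoin_simple_le_iff.mpr (inv_mem (mem_adjoin_simple_self F x))
    · apply adjoin_simple_le_iff.mpr
      have := inv_mem (mem_adjoin_simple_self F x⁻¹)
      rwa [inv_inv] at this
  have hc1 := card_adjoin F x
  have hc2 := card_adjoin F x⁻¹
  rw [h1, hc1] at hc2
  exact Nat.pow_right_injective (one_lt_q F) hc2.symm

lemma two_f_pow (f : ℕ) (x : AC F) :
    (x ^ Fintype.card F ^ f) ^ Fintype.card F ^ f = x ^ Fintype.card F ^ (2 * f) := by
  rw [frobQ_frobQ]; ring_nf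

set_option maxHeartbeats 1000000 in
set_option synthInstance.maxHeartbeats 400000 in
/-- The F-fiberwise count for the relative trace map on the subfield of order q^(2f). -/
lemma card_trace_set (f : ℕ) (hf : f ≠ 0) :
    Nat.card {γ : AC F // γ ^ Fintype.card F ^ (2 * f) = γ ∧
      ∃ b : F, γ + γ ^ Fintype.card F ^ f = algebraMap F (AC F) b} =
      Fintype.card F ^ (f + 1) := by
  have h1 : 1 < Fintype.card F := one_lt_q F
  set q := Fintype.card F with hq
  -- the subfield E of order q^(2f), as an additive group
  have hqf2 : 1 < q ^ f := Nat.one_lt_pow hf h1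
  set E := Esub F (2 * f) with hE
  have hEequiv : E ≃ {x : AC F // x ^ q ^ (2 * f) = x} :=
    { toFun := fun y => ⟨y.1, y.2⟩
      invFun := fun y => ⟨y.1, y.2⟩
      left_inv := fun _ => rfl
      right_inv := fun _ => rfl }
  haveI hEfin : Finite E := by
    haveI := finite_Esub F (2 * f) (by omega)
    exact Finite.of_equiv _ hEequiv.symm
  have hcardE : Nat.card E = q ^ (2 * f) := by
    rw [Nat.card_congr hEequiv]
    exact card_Esub F (2 * f) (by omega)
  -- membership helpers
  have hmemE : ∀ x : AC F, x ∈ E ↔ x ^ q ^ (2 * f) = x := fun x => Iff.rfl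
  have hTmem : ∀ γ : AC F, γ ∈ E → γ + γ ^ q ^ f ∈ E := by
    intro γ hγ
    rw [hmemE] at *
    have h2 : (γ ^ q ^ f) ^ q ^ (2 * f) = γ ^ q ^ f := by
      rw [frobQ_frobQ, show f + 2 * f = 2 * f + f by ring, ← frobQ_frobQ, hγ]
    rw [frobQ_add, hγ, h2]
  -- the trace map as an additive group hom on E
  set T : E →+ E :=
    { toFun := fun γ => ⟨γ.1 + γ.1 ^ q ^ f, hTmem γ.1 γ.2⟩
      map_zero' := by
        apply Subtype.ext
        simp only [ZeroMemClass.coe_zero]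
        rw [zero_pow (by positivity), add_zero]
      map_add' := by
        intro x y
        apply Subtype.ext
        simp only [AddMemClass.coe_add]
        rw [frobQ_add]
        ring } with hT
  have hTval : ∀ γ : E, (T γ).1 = γ.1 + γ.1 ^ q ^ f := fun γ => rfl
  -- range is inside the subfield of order q^f
  have hrange_fix : ∀ γ : E, (T γ).1 ^ q ^ f = (T γ).1 := by
    intro γ
    rw [hTval, frobQ_add, two_f_pow, γ.2]
    ring
  -- counting the kernel
  have hker_le : Nat.card T.ker ≤ q ^ f := by
    classical
    set P : (AC F)[X] := X ^ q ^ f + X with hP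
    have hPne : P ≠ 0 := by
      intro h
      have := congrArg (fun p => Polynomial.coeff p (q ^ f)) h
      simp only [hP, coeff_add, coeff_X_pow_self, Polynomial.coeff_zero] at this
      rw [Polynomial.coeff_X, if_neg (by omega : ¬ 1 = q ^ f)] at this
      norm_num at this
    have hPdeg : P.natDegree ≤ q ^ f := by
      apply le_trans (natDegree_add_le _ _)
      simp only [hP, natDegree_X_pow, natDegree_X]
      omega
    have : Nat.card T.ker ≤ Nat.card ↥(P.roots.toFinset) := by
      apply Nat.card_le_card_of_injective
        (fun κ => (⟨κ.1.1, by
          rw [Multiset.mem_toFinset, mem_roots hPne]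
          have h00 : T κ.1 = 0 := AddMonoidHom.mem_ker.mp κ.2
          have h0 : (T κ.1).1 = (0 : AC F) := by
            rw [h00]; rfl
          rw [hTval] at h0
          simp only [hP, IsRoot.def, eval_add, eval_pow, eval_X]
          rw [add_comm]; exact h0⟩ : ↥(P.roots.toFinset)))
      intro x y hxy
      simp only [Subtype.mk.injEq] at hxy
      apply Subtype.ext; apply Subtype.ext
      exact hxy
    apply le_trans this
    rw [Nat.card_eq_fintype_card, Fintype.card_coe]
    exact le_trans (Multiset.toFinset_card_le _) (le_trans (card_roots' P) hPdeg)
  -- counting the range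
  have hWcard : Nat.card {y : E // y.1 ^ q ^ f = y.1} = q ^ f := by
    have heq : {y : E // y.1 ^ q ^ f = y.1} ≃ {x : AC F // x ^ q ^ f = x} :=
      { toFun := fun y => ⟨y.1.1, y.2⟩
        invFun := fun x => ⟨⟨x.1, by
          rw [hmemE, ← two_f_pow, x.2, x.2]⟩, x.2⟩
        left_inv := fun y => by apply Subtype.ext; apply Subtype.ext; rfl
        right_inv := fun x => rfl }
    rw [Nat.card_congr heq]
    exact card_Esub F f hf
  have hrange_le : Nat.card T.range ≤ q ^ f := by
    have : Nat.card T.range ≤ Nat.card {y : E // y.1 ^ q ^ f = y.1} := by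
      apply Nat.card_le_card_of_injective
        (fun y => (⟨y.1, by obtain ⟨δ, hδ⟩ := y.2; rw [← hδ]; exact hrange_fix δ⟩ :
          {y : E // y.1 ^ q ^ f = y.1}))
      intro x y hxy
      simp only [Subtype.mk.injEq] at hxy
      apply Subtype.ext
      exact hxy
    omega
  -- |ker| * |range| = q^(2f)
  have hiso : Nat.card (E ⧸ T.ker) = Nat.card T.range :=
    Nat.card_congr (QuotientAddGroup.quotientKerEquivRange T).toEquiv
  have hprod : Nat.card T.range * Nat.card T.ker = q ^ (2 * f) := by
    rw [← hiso, ← hcardE, Nat.card_congr (AddSubgroup.addGroupEquivQuotientProdAddSubgroup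
      (s := T.ker)), Nat.card_prod]
  have hq2f : q ^ (2 * f) = q ^ f * q ^ f := by rw [two_mul, pow_add]
  have hqfpos : 0 < q ^ f := by positivity
  have hba : Nat.card T.range * Nat.card T.ker = q ^ f * q ^ f := by rw [hprod, hq2f]
  have hker_eq : Nat.card T.ker = q ^ f := by
    have h5 : q ^ f * q ^ f ≤ q ^ f * Nat.card T.ker := by
      calc q ^ f * q ^ f = Nat.card T.range * Nat.card T.ker := hba.symm
      _ ≤ q ^ f * Nat.card T.ker := Nat.mul_le_mul_right _ hrange_le
    have h6 := Nat.le_of_mul_le_mul_left h5 hqfpos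
    omega
  have hrange_eq : Nat.card T.range = q ^ f := by
    have h5 : q ^ f * q ^ f ≤ Nat.card T.range * q ^ f := by
      calc q ^ f * q ^ f = Nat.card T.range * Nat.card T.ker := hba.symm
      _ ≤ Nat.card T.range * q ^ f := Nat.mul_le_mul_left _ hker_le
    have h6 := Nat.le_of_mul_le_mul_right h5 hqfpos
    omega
  -- range is the full subfield of order q^f
  have hsurj : ∀ y : E, y.1 ^ q ^ f = y.1 → ∃ δ : E, T δ = y := by
    intro y hy
    have hsub : (T.range : Set E) ⊆ {y : E | y.1 ^ q ^ f = y.1} := by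
      rintro z ⟨δ, rfl⟩
      exact hrange_fix δ
    have hcards : ({y : E | y.1 ^ q ^ f = y.1} : Set E).ncard ≤ (T.range : Set E).ncard := by
      rw [← Nat.card_coe_set_eq, ← Nat.card_coe_set_eq]
      have e1 : Nat.card ↥({y : E | y.1 ^ q ^ f = y.1} : Set E) = q ^ f :=
        (Nat.card_congr (Equiv.subtypeEquivRight fun y => Iff.rfl)).trans hWcard
      have e2 : Nat.card ↥(T.range : Set E) = q ^ f :=
        (Nat.card_congr (Equiv.subtypeEquivRight fun y => Iff.rfl)).trans hrange_eq
      omega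
    have := Set.eq_of_subset_of_ncard_le hsub hcards (Set.toFinite _)
    have hymem : y ∈ (T.range : Set E) := by rw [this]; exact hy
    exact hymem
  -- the target set
  have hfinal : Nat.card {γ : E // ∃ b : F, (T γ).1 = algebraMap F (AC F) b} = q ^ (f + 1) := by
    classical
    set Tgt := {γ : E // ∃ b : F, (T γ).1 = algebraMap F (AC F) b} with hTgt
    haveI : Finite Tgt := Subtype.finite
    set χ : Tgt → F := fun γ => Classical.choose γ.2 with hχ
    have hχspec : ∀ γ : Tgt, (T γ.1).1 = algebraMap F (AC F) (χ γ) :=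
      fun γ => Classical.choose_spec γ.2
    have hχ_iff : ∀ (γ : Tgt) (b : F), χ γ = b ↔ (T γ.1).1 = algebraMap F (AC F) b := by
      intro γ b
      constructor
      · rintro rfl; exact hχspec γ
      · intro h
        have := (hχspec γ).symm.trans h
        exact (algebraMap F (AC F)).injective this
    haveI : ∀ b : F, Finite {γ : Tgt // χ γ = b} := fun b => Subtype.finite
    haveI : ∀ b : F, Fintype {γ : Tgt // χ γ = b} := fun b => Fintype.ofFinite _
    haveI : Fintype Tgt := Fintype.ofFinite _
    have hsig : Nat.card Tgt = ∑ b : F, Nat.card {γ : Tgt // χ γ = b} := by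
      rw [Nat.card_congr (Equiv.sigmaFiberEquiv χ).symm, Nat.card_eq_fintype_card,
        Fintype.card_sigma]
      congr 1
      ext b
      rw [Nat.card_eq_fintype_card]
    have hfib : ∀ b : F, Nat.card {γ : Tgt // χ γ = b} = q ^ f := by
      intro b
      have hbE : algebraMap F (AC F) b ∈ E := by
        rw [hmemE]; exact frobQ_algebraMap F (2 * f) b
      set yb : E := ⟨algebraMap F (AC F) b, hbE⟩ with hyb
      obtain ⟨δ0, hδ0⟩ := hsurj yb (frobQ_algebraMap F f b)
      have hequiv : {γ : Tgt // χ γ = b} ≃ T.ker :=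
        { toFun := fun γ => ⟨γ.1.1 - δ0, by
            rw [AddMonoidHom.mem_ker, T.map_sub, hδ0]
            have : T γ.1.1 = yb := by
              apply Subtype.ext
              rw [(hχ_iff γ.1 b).mp γ.2]
            rw [this, sub_self]⟩
          invFun := fun κ => ⟨⟨κ.1 + δ0, ⟨b, by
            rw [T.map_add, AddMonoidHom.mem_ker.mp κ.2, zero_add, hδ0]⟩⟩, by
            apply (hχ_iff _ b).mpr
            rw [T.map_add, AddMonoidHom.mem_ker.mp κ.2, zero_add, hδ0]⟩
          left_inv := fun γ => by
            apply Subtype.ext; apply Subtype.ext; apply Subtype.ext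
            show (γ.1.1.1 : AC F) - δ0.1 + δ0.1 = γ.1.1.1
            ring
          right_inv := fun κ => by
            apply Subtype.ext; apply Subtype.ext
            show (κ.1.1 : AC F) + δ0.1 - δ0.1 = κ.1.1
            ring }
      rw [Nat.card_congr hequiv, hker_eq]
    rw [hsig]
    simp only [hfib]
    rw [Finset.sum_const, Finset.card_univ, smul_eq_mul, ← hq, pow_succ]
    ring
  -- identify the target set with the statement set
  rw [← hfinal]
  apply Nat.card_congr
  exact
    { toFun := fun γ => ⟨⟨γ.1, γ.2.1⟩, γ.2.2⟩
      invFun := fun γ => ⟨γ.1.1, γ.1.2, γ.2⟩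
      left_inv := fun γ => rfl
      right_inv := fun γ => by apply Subtype.ext; rfl }

/-! ### Counting by degree and divisors -/

def Pc (m : ℕ) (γ : AC F) : Prop :=
  ∃ b : F, γ + γ ^ Fintype.card F ^ m = algebraMap F (AC F) b

def Bcard (m e : ℕ) : ℕ :=
  Nat.card {γ : AC F // γ ^ Fintype.card F ^ e = γ ∧ Pc F m γ}

def ccard (m d : ℕ) : ℕ :=
  Nat.card {γ : AC F // (minpoly F γ).natDegree = d ∧ Pc F m γ}

lemma finite_B (m e : ℕ) (he : e ≠ 0) :
    Finite {γ : AC F // γ ^ Fintype.card F ^ e = γ ∧ Pc F m γ} := by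
  haveI := finite_Esub F e he
  exact Finite.of_injective
    (fun γ => (⟨γ.1, γ.2.1⟩ : {x : AC F // x ^ Fintype.card F ^ e = x}))
    (fun x y hxy => by
      simp only [Subtype.mk.injEq] at hxy
      exact Subtype.ext hxy)

lemma finite_c (m d : ℕ) (hd : d ≠ 0) :
    Finite {γ : AC F // (minpoly F γ).natDegree = d ∧ Pc F m γ} := by
  haveI := finite_Esub F d hd
  exact Finite.of_injective
    (fun γ => (⟨γ.1, pow_q_pow_of_deg_dvd F (by rw [γ.2.1])⟩ :
      {x : AC F // x ^ Fintype.card F ^ d = x}))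
    (fun x y hxy => by
      simp only [Subtype.mk.injEq] at hxy
      exact Subtype.ext hxy)

lemma B_eq_sum_c (m e : ℕ) (he : e ≠ 0) :
    Bcard F m e = ∑ d ∈ e.divisors, ccard F m d := by
  classical
  haveI hfin : Finite {γ : AC F // γ ^ Fintype.card F ^ e = γ ∧ Pc F m γ} :=
    finite_B F m e he
  set χ : {γ : AC F // γ ^ Fintype.card F ^ e = γ ∧ Pc F m γ} → ↥e.divisors :=
    fun γ => ⟨(minpoly F γ.1).natDegree,
      Nat.mem_divisors.mpr ⟨(pow_q_eq_iff F γ.1 e).mp γ.2.1, he⟩⟩ with hχ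
  haveI : ∀ d : ↥e.divisors, Finite {γ : {γ : AC F // γ ^ Fintype.card F ^ e = γ ∧ Pc F m γ} // χ γ = d} :=
    fun d => Subtype.finite
  haveI : ∀ d : ↥e.divisors, Fintype {γ : {γ : AC F // γ ^ Fintype.card F ^ e = γ ∧ Pc F m γ} // χ γ = d} :=
    fun d => Fintype.ofFinite _
  haveI : Fintype {γ : AC F // γ ^ Fintype.card F ^ e = γ ∧ Pc F m γ} := Fintype.ofFinite _
  have hsig : Bcard F m e = ∑ d : ↥e.divisors, Nat.card {γ : {γ : AC F // γ ^ Fintype.card F ^ e = γ ∧ Pc F m γ} // χ γ = d} := by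
    rw [Bcard, Nat.card_congr (Equiv.sigmaFiberEquiv χ).symm, Nat.card_eq_fintype_card,
      Fintype.card_sigma]
    congr 1
    ext d
    rw [Nat.card_eq_fintype_card]
  have hfib : ∀ d : ↥e.divisors, Nat.card {γ : {γ : AC F // γ ^ Fintype.card F ^ e = γ ∧ Pc F m γ} // χ γ = d}
      = ccard F m d.1 := by
    intro d
    apply Nat.card_congr
    exact
      { toFun := fun γ => ⟨γ.1.1, by
          have := congrArg Subtype.val γ.2
          exact this, γ.1.2.2⟩
        invFun := fun x => ⟨⟨x.1,
          (pow_q_eq_iff F x.1 e).mpr (by rw [x.2.1]; exact (Nat.mem_divisors.mp d.2).1), x.2.2⟩,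
          Subtype.ext x.2.1⟩
        left_inv := fun γ => by
          apply Subtype.ext; apply Subtype.ext; rfl
        right_inv := fun x => by
          apply Subtype.ext; rfl }
  rw [hsig]
  rw [Finset.sum_congr rfl (fun d _ => hfib d)]
  exact Finset.sum_coe_sort e.divisors (ccard F m)

lemma moebius_ccard (m : ℕ) (hm : m ≠ 0) :
    (ccard F m (2 * m) : ℤ) =
      ∑ x ∈ (2 * m).divisorsAntidiagonal,
        ArithmeticFunction.moebius x.1 * (Bcard F m x.2 : ℤ) := by
  have key := (ArithmeticFunction.sum_eq_iff_sum_smul_moebius_eq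
    (f := fun d => (ccard F m d : ℤ)) (g := fun e => (Bcard F m e : ℤ))).mp
  have h1 : ∀ n > 0, ∑ i ∈ n.divisors, (ccard F m i : ℤ) = (Bcard F m n : ℤ) := by
    intro n hn
    rw [B_eq_sum_c F m n hn.ne']
    push_cast
    rfl
  have h2 := key h1 (2 * m) (by omega)
  rw [← h2]
  apply Finset.sum_congr rfl
  intro x _
  rw [zsmul_eq_mul]
  norm_cast

/-- Value of `Bcard` for `e ∣ m` when `q` is odd. -/
lemma Bcard_dvd_odd (m e : ℕ) (he : e ≠ 0) (hem : e ∣ m) (hq : Odd (Fintype.card F)) :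
    Bcard F m e = Fintype.card F := by
  have h2 : (2 : F) ≠ 0 := by
    obtain ⟨p, s, hp, hs, hcard, hcharF, _⟩ := exists_char F
    haveI := hcharF
    have h2n : (2 : F) = ((2 : ℕ) : F) := by norm_cast
    rw [h2n, Ne, CharP.cast_eq_zero_iff F p 2]
    intro hdvd
    have hp2 : p = 2 := (Nat.prime_dvd_prime_iff_eq hp Nat.prime_two).mp hdvd
    rw [hcard, hp2] at hq
    have heven : Even (2 ^ s) := Nat.even_pow.mpr ⟨even_two, hs.ne'⟩
    exact (Nat.not_odd_iff_even.mpr heven) hq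
  have hsets : ∀ γ : AC F, (γ ^ Fintype.card F ^ e = γ ∧ Pc F m γ) ↔
      (∃ b : F, γ = algebraMap F (AC F) b) := by
    intro γ
    constructor
    · rintro ⟨h1, b, hb⟩
      have hγm : γ ^ Fintype.card F ^ m = γ :=
        pow_q_pow_of_deg_dvd F (dvd_trans ((pow_q_eq_iff F γ e).mp h1) hem)
      rw [hγm] at hb
      refine ⟨b / 2, ?_⟩
      have h2K : (2 : AC F) ≠ 0 := by
        intro h
        apply h2
        apply (algebraMap F (AC F)).injective
        rw [map_ofNat, h, map_zero]
      rw [map_div₀, map_ofNat, eq_div_iff h2K]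
      linear_combination hb
    · rintro ⟨b, rfl⟩
      refine ⟨frobQ_algebraMap F e b, b + b, ?_⟩
      rw [frobQ_algebraMap, map_add]
  rw [Bcard, Nat.card_congr (Equiv.subtypeEquivRight hsets)]
  have : {γ : AC F // ∃ b : F, γ = algebraMap F (AC F) b} ≃ F :=
    { toFun := fun γ => Classical.choose γ.2
      invFun := fun b => ⟨algebraMap F (AC F) b, b, rfl⟩
      left_inv := fun γ => by
        apply Subtype.ext
        exact (Classical.choose_spec γ.2).symm
      right_inv := fun b => by
        have : Classical.choose (⟨b, rfl⟩ : ∃ b' : F, algebraMap F (AC F) b = algebraMap F (AC F) b') = b := by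
          have h := Classical.choose_spec (⟨b, rfl⟩ : ∃ b' : F, algebraMap F (AC F) b = algebraMap F (AC F) b')
          exact ((algebraMap F (AC F)).injective h.symm)
        exact this }
  rw [Nat.card_congr this, Nat.card_eq_fintype_card]

/-- Value of `Bcard` for `e ∣ m` when `q` is even. -/
lemma Bcard_dvd_even (m e : ℕ) (he : e ≠ 0) (hem : e ∣ m) (hq : Even (Fintype.card F)) :
    Bcard F m e = Fintype.card F ^ e := by
  have hchar2 : (2 : AC F) = 0 := by
    obtain ⟨p, s, hp, hs, hcard, hcharF, hcharK⟩ := exists_char F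
    have hp2 : p = 2 := by
      rcases hq with ⟨t, ht⟩
      have : (2 : ℕ) ∣ p ^ s := by rw [← hcard]; omega
      have := (Nat.prime_two.dvd_of_dvd_pow this)
      exact ((Nat.prime_dvd_prime_iff_eq Nat.prime_two hp).mp this).symm
    haveI := hcharK
    rw [show ((2 : AC F)) = ((2 : ℕ) : AC F) by norm_cast, CharP.cast_eq_zero_iff (AC F) p, hp2]
  have hsets : ∀ γ : AC F, (γ ^ Fintype.card F ^ e = γ ∧ Pc F m γ) ↔
      γ ^ Fintype.card F ^ e = γ := by
    intro γ
    constructor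
    · exact fun h => h.1
    · intro h1
      refine ⟨h1, 0, ?_⟩
      have hγm : γ ^ Fintype.card F ^ m = γ :=
        pow_q_pow_of_deg_dvd F (dvd_trans ((pow_q_eq_iff F γ e).mp h1) hem)
      rw [hγm, map_zero]
      have : γ + γ = 2 * γ := by ring
      rw [this, hchar2, zero_mul]
  rw [Bcard, Nat.card_congr (Equiv.subtypeEquivRight hsets)]
  exact card_Esub F e he

/-- Value of `Bcard` at `2f` where `f ∣ m` with odd quotient. -/
lemma Bcard_two_f (m f : ℕ) (hf : f ≠ 0) (hfm : f ∣ m) (hodd : Odd (m / f)) :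
    Bcard F m (2 * f) = Fintype.card F ^ (f + 1) := by
  obtain ⟨t, ht⟩ := hodd
  have hm : m = 2 * f * t + f := by
    obtain ⟨k, hk⟩ := hfm
    rw [hk, Nat.mul_div_cancel_left _ (Nat.pos_of_ne_zero hf)] at ht
    rw [hk, ht]; ring
  have hsets : ∀ γ : AC F, (γ ^ Fintype.card F ^ (2 * f) = γ ∧ Pc F m γ) ↔
      (γ ^ Fintype.card F ^ (2 * f) = γ ∧
        ∃ b : F, γ + γ ^ Fintype.card F ^ f = algebraMap F (AC F) b) := by
    intro γ
    have hiff : γ ^ Fintype.card F ^ (2 * f) = γ →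
        γ ^ Fintype.card F ^ m = γ ^ Fintype.card F ^ f := by
      intro h1
      have h2 : γ ^ Fintype.card F ^ (2 * f * t) = γ :=
        pow_q_pow_of_deg_dvd F (Dvd.dvd.mul_right ((pow_q_eq_iff F γ (2 * f)).mp h1) t)
      calc γ ^ Fintype.card F ^ m = (γ ^ Fintype.card F ^ (2 * f * t)) ^ Fintype.card F ^ f := by
            rw [frobQ_frobQ, ← hm]
        _ = γ ^ Fintype.card F ^ f := by rw [h2]
    constructor
    · rintro ⟨h1, b, hb⟩
      exact ⟨h1, b, by rw [← hiff h1]; exact hb⟩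
    · rintro ⟨h1, b, hb⟩
      exact ⟨h1, b, by rw [hiff h1]; exact hb⟩
  rw [Bcard, Nat.card_congr (Equiv.subtypeEquivRight hsets)]
  exact card_trace_set F f hf

/-! ### Evaluating the Möbius sum -/

lemma moebius_two_mul_even {c : ℕ} (hc : Even c) :
    ArithmeticFunction.moebius (2 * c) = 0 := by
  apply ArithmeticFunction.moebius_eq_zero_of_not_squarefree
  intro hsq
  obtain ⟨c', rfl⟩ := hc
  have h4 : (2 : ℕ) * 2 ∣ 2 * (c' + c') := ⟨c', by ring⟩
  have := hsq 2 h4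
  rw [Nat.isUnit_iff] at this
  omega

lemma moebius_two_mul_odd {c : ℕ} (hc : Odd c) :
    ArithmeticFunction.moebius (2 * c) = - ArithmeticFunction.moebius c := by
  rw [ArithmeticFunction.isMultiplicative_moebius.map_mul_of_coprime
    (Nat.coprime_two_left.mpr hc),
    ArithmeticFunction.moebius_apply_prime Nat.prime_two]
  ring

/-- Splitting the antidiagonal Möbius sum into even and odd first components. -/
lemma antidiagonal_split (m : ℕ) (hm : m ≠ 0) (G : ℕ → ℤ) :
    ∑ x ∈ (2 * m).divisorsAntidiagonal, ArithmeticFunction.moebius x.1 * G x.2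
      = (∑ x ∈ m.divisorsAntidiagonal, ArithmeticFunction.moebius (2 * x.1) * G x.2)
      + ∑ d ∈ m.divisors.filter (fun d => Odd d),
          ArithmeticFunction.moebius d * G (2 * (m / d)) := by
  classical
  rw [← Finset.sum_filter_add_sum_filter_not ((2 * m).divisorsAntidiagonal)
    (fun x => Even x.1) (fun x => ArithmeticFunction.moebius x.1 * G x.2)]
  congr 1
  · -- even part
    apply Finset.sum_nbij' (fun x => (x.1 / 2, x.2)) (fun x => (2 * x.1, x.2))
    · rintro ⟨a, e⟩ ha
      rw [Finset.mem_filter, Nat.mem_divisorsAntidiagonal] at ha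
      obtain ⟨⟨hprod, _⟩, heven⟩ := ha
      obtain ⟨a', rfl⟩ := heven
      rw [Nat.mem_divisorsAntidiagonal]
      constructor
      · simp only []
        have : a' + a' = 2 * a' := by ring
        rw [this] at hprod ⊢
        rw [Nat.mul_div_cancel_left _ (by norm_num)]
        have h2 : 2 * (a' * e) = 2 * m := by rw [← hprod]; ring
        omega
      · omega
    · rintro ⟨a, e⟩ ha
      rw [Nat.mem_divisorsAntidiagonal] at ha
      rw [Finset.mem_filter, Nat.mem_divisorsAntidiagonal]
      refine ⟨⟨?_, by omega⟩, ⟨a, by simp only []; ring⟩⟩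
      simp only []
      rw [← ha.1]; ring
    · rintro ⟨a, e⟩ ha
      rw [Finset.mem_filter, Nat.mem_divisorsAntidiagonal] at ha
      obtain ⟨⟨hprod, _⟩, heven⟩ := ha
      obtain ⟨a', rfl⟩ := heven
      have : a' + a' = 2 * a' := by ring
      simp only [Prod.mk.injEq]
      rw [this, Nat.mul_div_cancel_left _ (by norm_num)]
      exact ⟨rfl, trivial⟩
    · rintro ⟨a, e⟩ _
      simp only [Prod.mk.injEq]
      rw [Nat.mul_div_cancel_left _ (by norm_num)]
      exact ⟨rfl, trivial⟩
    · rintro ⟨a, e⟩ ha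
      rw [Finset.mem_filter, Nat.mem_divisorsAntidiagonal] at ha
      obtain ⟨⟨hprod, _⟩, heven⟩ := ha
      obtain ⟨a', rfl⟩ := heven
      have h2 : a' + a' = 2 * a' := by ring
      simp only [h2]
      rw [Nat.mul_div_cancel_left _ (by norm_num)]
  · -- odd part
    apply Finset.sum_nbij' (fun x => x.1) (fun d => (d, 2 * (m / d)))
    · rintro ⟨a, e⟩ ha
      rw [Finset.mem_filter, Nat.mem_divisorsAntidiagonal] at ha
      obtain ⟨⟨hprod, _⟩, hodd⟩ := ha
      rw [Nat.not_even_iff_odd] at hodd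
      rw [Finset.mem_filter, Nat.mem_divisors]
      simp only [] at hprod hodd ⊢
      refine ⟨⟨?_, hm⟩, hodd⟩
      have hdvd : a ∣ 2 * m := Dvd.intro _ hprod
      exact (Nat.coprime_two_right.mpr hodd).dvd_of_dvd_mul_left hdvd
    · intro d hd
      rw [Finset.mem_filter, Nat.mem_divisors] at hd
      obtain ⟨⟨hdvd, _⟩, hodd⟩ := hd
      rw [Finset.mem_filter, Nat.mem_divisorsAntidiagonal]
      have hd0 : d ≠ 0 := by
        rintro rfl
        exact (Nat.not_odd_iff_even.mpr Even.zero) hodd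
      refine ⟨⟨?_, by omega⟩, ?_⟩
      · simp only []
        rw [show d * (2 * (m / d)) = 2 * (d * (m / d)) by ring, Nat.mul_div_cancel' hdvd]
      · simp only []
        rw [Nat.not_even_iff_odd]
        exact hodd
    · rintro ⟨a, e⟩ ha
      rw [Finset.mem_filter, Nat.mem_divisorsAntidiagonal] at ha
      obtain ⟨⟨hprod, _⟩, hodd⟩ := ha
      rw [Nat.not_even_iff_odd] at hodd
      simp only [Prod.mk.injEq]
      refine ⟨trivial, ?_⟩
      simp only [] at hprod
      have ha0 : a ≠ 0 := by rintro rfl; simp at hprod; omega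
      have hdvd : a ∣ 2 * m := Dvd.intro _ hprod
      have hadvd : a ∣ m := (Nat.coprime_two_right.mpr hodd).dvd_of_dvd_mul_left hdvd
      obtain ⟨k, rfl⟩ := hadvd
      rw [Nat.mul_div_cancel_left _ (Nat.pos_of_ne_zero ha0)]
      have : a * e = a * (2 * k) := by rw [hprod]; ring
      exact (Nat.eq_of_mul_eq_mul_left (Nat.pos_of_ne_zero ha0) this).symm
    · intro d _
      rfl
    · rintro ⟨a, e⟩ ha
      rw [Finset.mem_filter, Nat.mem_divisorsAntidiagonal] at ha
      obtain ⟨⟨hprod, _⟩, hodd⟩ := ha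
      rw [Nat.not_even_iff_odd] at hodd
      simp only [] at hprod hodd ⊢
      have ha0 : a ≠ 0 := by rintro rfl; simp at hprod; omega
      have hdvd : a ∣ 2 * m := Dvd.intro _ hprod
      have hadvd : a ∣ m := (Nat.coprime_two_right.mpr hodd).dvd_of_dvd_mul_left hdvd
      obtain ⟨k, hk⟩ := hadvd
      have he : e = 2 * k := by
        have : a * e = a * (2 * k) := by rw [hprod, hk]; ring
        exact Nat.eq_of_mul_eq_mul_left (Nat.pos_of_ne_zero ha0) this
      rw [he, hk, Nat.mul_div_cancel_left _ (Nat.pos_of_ne_zero ha0)]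

/-- The odd-divisor-part of the Möbius sum, with the `Bcard` values filled in. -/
lemma odd_part_value (m : ℕ) (hm : m ≠ 0) :
    ∑ d ∈ m.divisors.filter (fun d => Odd d),
        ArithmeticFunction.moebius d * (Bcard F m (2 * (m / d)) : ℤ)
      = (Fintype.card F : ℤ) * ∑ d ∈ m.divisors.filter (fun d => Odd d),
          ArithmeticFunction.moebius d * (Fintype.card F : ℤ) ^ (m / d) := by
  rw [Finset.mul_sum]
  apply Finset.sum_congr rfl
  intro d hd
  rw [Finset.mem_filter, Nat.mem_divisors] at hd
  obtain ⟨⟨hdvd, _⟩, hodd⟩ := hd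
  have hd0 : d ≠ 0 := by rintro rfl; exact (Nat.not_odd_iff_even.mpr Even.zero) hodd
  have hf0 : m / d ≠ 0 := by
    have := Nat.div_pos (Nat.le_of_dvd (Nat.pos_of_ne_zero hm) hdvd) (Nat.pos_of_ne_zero hd0)
    omega
  have hfdvd : m / d ∣ m := Nat.div_dvd_of_dvd hdvd
  have hquot : Odd (m / (m / d)) := by rw [Nat.div_div_self hdvd hm]; exact hodd
  rw [Bcard_two_f F m (m / d) hf0 hfdvd hquot]
  push_cast
  rw [pow_succ]
  ring

lemma even_part_value_odd_q (m : ℕ) (hm : m ≠ 0) (hq : Odd (Fintype.card F)) :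
    ∑ x ∈ m.divisorsAntidiagonal, ArithmeticFunction.moebius (2 * x.1) * (Bcard F m x.2 : ℤ)
      = - (Fintype.card F : ℤ) * ∑ c ∈ m.divisors.filter (fun c => Odd c),
          (ArithmeticFunction.moebius c : ℤ) := by
  classical
  have h1 : ∀ x ∈ m.divisorsAntidiagonal,
      ArithmeticFunction.moebius (2 * x.1) * (Bcard F m x.2 : ℤ)
        = ArithmeticFunction.moebius (2 * x.1) * (Fintype.card F : ℤ) := by
    intro x hx
    rw [Nat.mem_divisorsAntidiagonal] at hx
    have hx2 : x.2 ∣ m := Dvd.intro_left _ hx.1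
    have hx20 : x.2 ≠ 0 := by
      rintro h
      rw [h, mul_zero] at hx
      exact hx.2 hx.1.symm
    rw [Bcard_dvd_odd F m x.2 hx20 hx2 hq]
  rw [Finset.sum_congr rfl h1]
  have h2 : ∑ x ∈ m.divisorsAntidiagonal, (ArithmeticFunction.moebius (2 * x.1) : ℤ) * (Fintype.card F : ℤ)
      = (∑ c ∈ m.divisors, (ArithmeticFunction.moebius (2 * c) : ℤ)) * (Fintype.card F : ℤ) := by
    rw [Finset.sum_mul]
    exact Nat.sum_divisorsAntidiagonal (fun c e => (ArithmeticFunction.moebius (2 * c) : ℤ) * (Fintype.card F : ℤ))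
  rw [h2]
  have h3 : ∑ c ∈ m.divisors, (ArithmeticFunction.moebius (2 * c) : ℤ)
      = - ∑ c ∈ m.divisors.filter (fun c => Odd c), (ArithmeticFunction.moebius c : ℤ) := by
    rw [← Finset.sum_filter_add_sum_filter_not m.divisors (fun c => Odd c)
      (fun c => (ArithmeticFunction.moebius (2 * c) : ℤ))]
    have hA : ∑ c ∈ m.divisors.filter (fun c => Odd c), (ArithmeticFunction.moebius (2 * c) : ℤ)
        = - ∑ c ∈ m.divisors.filter (fun c => Odd c), (ArithmeticFunction.moebius c : ℤ) := by
      rw [← Finset.sum_neg_distrib]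
      apply Finset.sum_congr rfl
      intro c hc
      rw [Finset.mem_filter] at hc
      rw [moebius_two_mul_odd hc.2]
      try push_cast
      try ring
    have hB : ∑ c ∈ m.divisors.filter (fun c => ¬ Odd c), (ArithmeticFunction.moebius (2 * c) : ℤ) = 0 := by
      apply Finset.sum_eq_zero
      intro c hc
      rw [Finset.mem_filter, Nat.not_odd_iff_even] at hc
      rw [moebius_two_mul_even hc.2]
      try norm_num
    rw [hA, hB, add_zero]
  rw [h3]
  ring

lemma even_part_value_even_q (m : ℕ) (hm : m ≠ 0) (hq : Even (Fintype.card F)) :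
    ∑ x ∈ m.divisorsAntidiagonal, ArithmeticFunction.moebius (2 * x.1) * (Bcard F m x.2 : ℤ)
      = - ∑ c ∈ m.divisors.filter (fun c => Odd c),
          ArithmeticFunction.moebius c * (Fintype.card F : ℤ) ^ (m / c) := by
  classical
  have h1 : ∀ x ∈ m.divisorsAntidiagonal,
      ArithmeticFunction.moebius (2 * x.1) * (Bcard F m x.2 : ℤ)
        = ArithmeticFunction.moebius (2 * x.1) * (Fintype.card F : ℤ) ^ x.2 := by
    intro x hx
    rw [Nat.mem_divisorsAntidiagonal] at hx
    have hx2 : x.2 ∣ m := Dvd.intro_left _ hx.1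
    have hx20 : x.2 ≠ 0 := by
      rintro h
      rw [h, mul_zero] at hx
      exact hx.2 hx.1.symm
    rw [Bcard_dvd_even F m x.2 hx20 hx2 hq]
    push_cast
    ring
  rw [Finset.sum_congr rfl h1]
  have h2 : ∑ x ∈ m.divisorsAntidiagonal, (ArithmeticFunction.moebius (2 * x.1) : ℤ) * (Fintype.card F : ℤ) ^ x.2
      = ∑ c ∈ m.divisors, (ArithmeticFunction.moebius (2 * c) : ℤ) * (Fintype.card F : ℤ) ^ (m / c) :=
    Nat.sum_divisorsAntidiagonal (fun c e => (ArithmeticFunction.moebius (2 * c) : ℤ) * (Fintype.card F : ℤ) ^ e)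
  rw [h2]
  rw [← Finset.sum_filter_add_sum_filter_not m.divisors (fun c => Odd c)
    (fun c => (ArithmeticFunction.moebius (2 * c) : ℤ) * (Fintype.card F : ℤ) ^ (m / c))]
  have hA : ∑ c ∈ m.divisors.filter (fun c => Odd c), (ArithmeticFunction.moebius (2 * c) : ℤ) * (Fintype.card F : ℤ) ^ (m / c)
      = - ∑ c ∈ m.divisors.filter (fun c => Odd c), (ArithmeticFunction.moebius c : ℤ) * (Fintype.card F : ℤ) ^ (m / c) := by
    rw [← Finset.sum_neg_distrib]
    apply Finset.sum_congr rfl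
    intro c hc
    rw [Finset.mem_filter] at hc
    rw [moebius_two_mul_odd hc.2]
    push_cast
    ring
  have hB : ∑ c ∈ m.divisors.filter (fun c => ¬ Odd c), (ArithmeticFunction.moebius (2 * c) : ℤ) * (Fintype.card F : ℤ) ^ (m / c) = 0 := by
    apply Finset.sum_eq_zero
    intro c hc
    rw [Finset.mem_filter, Nat.not_odd_iff_even] at hc
    rw [moebius_two_mul_even hc.2]
    norm_num
  rw [hA, hB, add_zero]

/-- Master formula, odd q. -/
lemma master_odd (m : ℕ) (hm : m ≠ 0) (hq : Odd (Fintype.card F)) :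
    (ccard F m (2 * m) : ℤ) =
      (Fintype.card F : ℤ) * (∑ d ∈ m.divisors.filter (fun d => Odd d),
          ArithmeticFunction.moebius d * (Fintype.card F : ℤ) ^ (m / d))
      - (Fintype.card F : ℤ) * (∑ c ∈ m.divisors.filter (fun c => Odd c),
          (ArithmeticFunction.moebius c : ℤ)) := by
  rw [moebius_ccard F m hm, antidiagonal_split m hm (fun e => (Bcard F m e : ℤ)),
    even_part_value_odd_q F m hm hq, odd_part_value F m hm]
  ring

/-- Master formula, even q. -/
lemma master_even (m : ℕ) (hm : m ≠ 0) (hq : Even (Fintype.card F)) :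
    (ccard F m (2 * m) : ℤ) =
      ((Fintype.card F : ℤ) - 1) * (∑ d ∈ m.divisors.filter (fun d => Odd d),
          ArithmeticFunction.moebius d * (Fintype.card F : ℤ) ^ (m / d)) := by
  rw [moebius_ccard F m hm, antidiagonal_split m hm (fun e => (Bcard F m e : ℤ)),
    even_part_value_even_q F m hm hq, odd_part_value F m hm]
  ring

/-! ### The quadratic-transformation polynomials -/

def fsum (m : ℕ) (a : F) (h : F[X]) : F[X] :=
  ∑ i ∈ Finset.range (m + 1),
    Polynomial.C (h.coeff i) * Polynomial.X ^ (2 * i) *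
      (Polynomial.C a * Polynomial.X + 1) ^ (m - i)

lemma fsum_monic (m : ℕ) (hm : m ≠ 0) (a : F) (h : F[X]) (hmon : h.Monic)
    (hdeg : h.natDegree = m) :
    (fsum F m a h).Monic ∧ (fsum F m a h).natDegree = 2 * m := by
  set r : F[X] :=
    ∑ i ∈ Finset.range m, C (h.coeff i) * X ^ (2 * i) * (C a * X + 1) ^ (m - i) with hr
  have hsplit : fsum F m a h = X ^ (2 * m) + r := by
    rw [fsum, Finset.sum_range_succ]
    have hcoef : h.coeff m = 1 := by rw [← hdeg]; exact hmon.coeff_natDegree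
    rw [hcoef, Nat.sub_self, pow_zero, mul_one, map_one, one_mul]
    ring
  have hrdeg : r.natDegree ≤ 2 * m - 1 := by
    apply natDegree_sum_le_of_forall_le
    intro i hi
    rw [Finset.mem_range] at hi
    calc (C (h.coeff i) * X ^ (2 * i) * (C a * X + 1) ^ (m - i)).natDegree
        ≤ (C (h.coeff i) * X ^ (2 * i)).natDegree + ((C a * X + 1) ^ (m - i)).natDegree :=
          natDegree_mul_le
      _ ≤ 2 * i + (m - i) * 1 := by
          apply Nat.add_le_add
          · exact le_trans (natDegree_C_mul_le _ _) (le_of_eq (natDegree_X_pow _))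
          · refine le_trans natDegree_pow_le ?_
            apply Nat.mul_le_mul_left
            calc (C a * X + 1).natDegree
                ≤ max (C a * X).natDegree (1 : F[X]).natDegree := natDegree_add_le _ _
              _ ≤ 1 := by
                  apply max_le
                  · exact le_trans (natDegree_C_mul_le _ _) (le_of_eq natDegree_X)
                  · simp
      _ ≤ 2 * m - 1 := by omega
  have hrdeg' : r.degree < ((2 * m : ℕ) : WithBot ℕ) := by
    apply lt_of_le_of_lt degree_le_natDegree
    exact_mod_cast Nat.lt_of_le_of_lt hrdeg (by omega)
  constructor
  · rw [hsplit]; exact monic_X_pow_add hrdeg'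
  · rw [hsplit]
    apply natDegree_eq_of_degree_eq_some
    rw [degree_add_eq_left_of_degree_lt (by rw [degree_X_pow]; exact hrdeg'), degree_X_pow]

lemma aeval_fsum (m : ℕ) (a : F) (h : F[X]) (α : AC F) :
    aeval α (fsum F m a h) = ∑ i ∈ Finset.range (m + 1),
      algebraMap F (AC F) (h.coeff i) * α ^ (2 * i) *
        (algebraMap F (AC F) a * α + 1) ^ (m - i) := by
  rw [fsum, map_sum]
  apply Finset.sum_congr rfl
  intro i _
  simp only [map_mul, map_pow, map_add, map_one, aeval_C, aeval_X]

lemma aeval_fsum_eq (m : ℕ) (a : F) (h : F[X]) (hdeg : h.natDegree = m) (α β : AC F)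
    (hrel : (algebraMap F (AC F) a * α + 1) * β = α ^ 2) :
    aeval α (fsum F m a h) = (algebraMap F (AC F) a * α + 1) ^ m * aeval β h := by
  rw [aeval_fsum]
  have hterm : ∀ i ∈ Finset.range (m + 1),
      algebraMap F (AC F) (h.coeff i) * α ^ (2 * i) *
          (algebraMap F (AC F) a * α + 1) ^ (m - i)
        = (algebraMap F (AC F) a * α + 1) ^ m *
            (algebraMap F (AC F) (h.coeff i) * β ^ i) := by
    intro i hi
    rw [Finset.mem_range] at hi
    have hα2i : α ^ (2 * i) = (algebraMap F (AC F) a * α + 1) ^ i * β ^ i := by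
      rw [pow_mul, ← hrel, mul_pow]
    rw [hα2i]
    have hpow : (algebraMap F (AC F) a * α + 1) ^ i *
        (algebraMap F (AC F) a * α + 1) ^ (m - i)
          = (algebraMap F (AC F) a * α + 1) ^ m := by
      rw [← pow_add]; congr 1; omega
    calc algebraMap F (AC F) (h.coeff i) *
          ((algebraMap F (AC F) a * α + 1) ^ i * β ^ i) *
          (algebraMap F (AC F) a * α + 1) ^ (m - i)
        = ((algebraMap F (AC F) a * α + 1) ^ i *
            (algebraMap F (AC F) a * α + 1) ^ (m - i)) *
          (algebraMap F (AC F) (h.coeff i) * β ^ i) := by ring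
      _ = (algebraMap F (AC F) a * α + 1) ^ m *
          (algebraMap F (AC F) (h.coeff i) * β ^ i) := by rw [hpow]
  rw [Finset.sum_congr rfl hterm, ← Finset.mul_sum]
  congr 1
  rw [aeval_eq_sum_range, hdeg]
  apply Finset.sum_congr rfl
  intro i _
  rw [Algebra.smul_def]

/-- Direction (a): every element of `U` gives a representation of its minimal polynomial. -/
lemma exists_rep_of_cond (m : ℕ) (hm : m ≠ 0) (α : AC F)
    (hdeg : (minpoly F α).natDegree = 2 * m) (b : F)
    (hb : α + α ^ Fintype.card F ^ m
      = algebraMap F (AC F) b * (α * α ^ Fintype.card F ^ m)) :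
    ∃ (a : F) (h : F[X]), h.Monic ∧ h.natDegree = m ∧ minpoly F α = fsum F m a h := by
  have hα2m : α ^ Fintype.card F ^ (2 * m) = α := pow_q_pow_of_deg_dvd F (by rw [hdeg])
  have hα0 : α ≠ 0 := by
    rintro rfl
    rw [deg_zero F] at hdeg; omega
  have hne : α ^ Fintype.card F ^ m ≠ α := by
    intro hcon
    have h2 := (pow_q_eq_iff F α m).mp hcon
    rw [hdeg] at h2
    have := Nat.le_of_dvd (by omega) h2
    omega
  set σα := α ^ Fintype.card F ^ m with hσα
  set β : AC F := -(α * σα) with hβ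
  have hβσ : β ^ Fintype.card F ^ m = β := by
    rw [hβ, frobQ_neg, mul_pow, hσα, frobQ_frobQ, show m + m = 2 * m by ring, hα2m]
    ring
  set u : AC F := α + σα with hu
  have huβ : algebraMap F (AC F) (-b) * β = u := by
    rw [map_neg]
    linear_combination (-(algebraMap F (AC F) b)) * hβ - hu - hb
  have hquad : α ^ 2 = u * α + β := by
    rw [hu, hβ]; ring
  have hβdvd : (minpoly F β).natDegree ∣ m := (pow_q_eq_iff F β m).mp hβσ
  set d := (minpoly F β).natDegree with hd
  have hd0 : 0 < d := minpoly.natDegree_pos (isInt F β)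
  have hdm : d ≤ m := Nat.le_of_dvd (by omega) hβdvd
  have hβd : β ^ Fintype.card F ^ d = β := pow_q_pow_of_deg_dvd F dvd_rfl
  have hud : u ^ Fintype.card F ^ d = u := by
    rw [← huβ, mul_pow, frobQ_algebraMap, hβd]
  have hαd : (α ^ Fintype.card F ^ d) ^ 2 = u * (α ^ Fintype.card F ^ d) + β := by
    have h2 := congrArg (fun x : AC F => x ^ Fintype.card F ^ d) hquad
    rw [frobQ_add, mul_pow, hud, hβd, pow_right_comm] at h2
    exact h2
  have hfactor : (α ^ Fintype.card F ^ d - α) * (α ^ Fintype.card F ^ d - σα) = 0 := by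
    linear_combination hαd + (α ^ Fintype.card F ^ d) * hu + hβ
  rcases mul_eq_zero.mp hfactor with hcase | hcase
  · exfalso
    have h3 : α ^ Fintype.card F ^ d = α := by linear_combination hcase
    have h4 := (pow_q_eq_iff F α d).mp h3
    rw [hdeg] at h4
    have := Nat.le_of_dvd hd0 h4
    omega
  · have hρ : α ^ Fintype.card F ^ d = σα := by linear_combination hcase
    have h2m_dvd : 2 * m ∣ d + m := by
      have h5 : α ^ Fintype.card F ^ (d + m) = α := by
        rw [← frobQ_frobQ, hρ, hσα, frobQ_frobQ, show m + m = 2 * m by ring, hα2m]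
      have h6 := (pow_q_eq_iff F α (d + m)).mp h5
      rwa [hdeg] at h6
    have hdm_eq : d = m := by
      have := Nat.le_of_dvd (by omega) h2m_dvd
      omega
    refine ⟨-b, minpoly F β, minpoly.monic (isInt F β), by rw [← hd, hdm_eq], ?_⟩
    have haeval : aeval α (fsum F m (-b) (minpoly F β)) = 0 := by
      rw [aeval_fsum_eq F m (-b) _ (by rw [← hd, hdm_eq]) α β
        (by linear_combination hquad + α * huβ)]
      rw [minpoly.aeval, mul_zero]
    obtain ⟨hfm, hfd⟩ := fsum_monic F m hm (-b) (minpoly F β)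
      (minpoly.monic (isInt F β)) (by rw [← hd, hdm_eq])
    have hdvd := minpoly.dvd F α haeval
    obtain ⟨c, hc⟩ := hdvd
    have hmin0 : minpoly F α ≠ 0 := minpoly.ne_zero (isInt F α)
    have hc0 : c ≠ 0 := by rintro rfl; rw [mul_zero] at hc; exact hfm.ne_zero hc
    have hcdeg : c.natDegree = 0 := by
      have h7 := natDegree_mul (p := minpoly F α) hmin0 hc0
      rw [← hc, hfd, hdeg] at h7
      omega
    have hclead : c = 1 := by
      have hlc := congrArg leadingCoeff hc
      rw [leadingCoeff_mul, (minpoly.monic (isInt F α)).leadingCoeff, one_mul,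
        hfm.leadingCoeff] at hlc
      rw [eq_C_of_natDegree_eq_zero hcdeg]
      rw [Polynomial.leadingCoeff, hcdeg] at hlc
      rw [← hlc, map_one]
    rw [hc, hclead, mul_one]

/-- Direction (b): every root of an irreducible `fsum` polynomial lies in `U`. -/
lemma cond_of_root (m : ℕ) (hm : m ≠ 0) (a : F) (h : F[X]) (hmon : h.Monic)
    (hdeg : h.natDegree = m) (hirr : Irreducible (fsum F m a h)) (α : AC F)
    (haeval : aeval α (fsum F m a h) = 0) :
    minpoly F α = fsum F m a h ∧ (minpoly F α).natDegree = 2 * m ∧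
      α + α ^ Fintype.card F ^ m
        = algebraMap F (AC F) (-a) * (α * α ^ Fintype.card F ^ m) := by
  obtain ⟨hfm, hfd⟩ := fsum_monic F m hm a h hmon hdeg
  have hminp : minpoly F α = fsum F m a h :=
    (minpoly.eq_of_irreducible_of_monic hirr haeval hfm).symm
  have hdegα : (minpoly F α).natDegree = 2 * m := by rw [hminp, hfd]
  refine ⟨hminp, hdegα, ?_⟩
  have hα0 : α ≠ 0 := by rintro rfl; rw [deg_zero F] at hdegα; omega
  set gK := algebraMap F (AC F) a * α + 1 with hgK
  have hg0 : gK ≠ 0 := by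
    intro hg
    have haeval' := haeval
    rw [aeval_fsum, Finset.sum_range_succ] at haeval'
    have hzero : ∀ i ∈ Finset.range m,
        algebraMap F (AC F) (h.coeff i) * α ^ (2 * i) *
          (algebraMap F (AC F) a * α + 1) ^ (m - i) = 0 := by
      intro i hi
      rw [Finset.mem_range] at hi
      rw [← hgK, hg, zero_pow (by omega), mul_zero]
    rw [Finset.sum_eq_zero hzero, zero_add, Nat.sub_self, pow_zero, mul_one] at haeval'
    have hcoef : h.coeff m = 1 := by rw [← hdeg]; exact hmon.coeff_natDegree
    rw [hcoef, map_one, one_mul] at haeval'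
    exact hα0 ((pow_eq_zero_iff (by omega : 2 * m ≠ 0)).mp haeval')
  set β := α ^ 2 * gK⁻¹ with hβ
  have hrel : gK * β = α ^ 2 := by
    rw [hβ]
    field_simp
  have hβeval : aeval β h = 0 := by
    have h2 := aeval_fsum_eq F m a h hdeg α β (by rw [← hgK]; exact hrel)
    rw [haeval] at h2
    have hgm : gK ^ m ≠ 0 := pow_ne_zero _ hg0
    rw [← hgK] at h2
    exact (mul_eq_zero.mp h2.symm).resolve_left hgm
  have hh0 : h ≠ 0 := hmon.ne_zero
  have hβdvd : minpoly F β ∣ h := minpoly.dvd F β hβeval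
  have hdle : (minpoly F β).natDegree ≤ m := by
    rw [← hdeg]; exact natDegree_le_of_dvd hβdvd hh0
  set d := (minpoly F β).natDegree with hd
  have hd0 : 0 < d := minpoly.natDegree_pos (isInt F β)
  have hβd : β ^ Fintype.card F ^ d = β := pow_q_pow_of_deg_dvd F dvd_rfl
  have hquad : α ^ 2 = (algebraMap F (AC F) a * β) * α + β := by
    linear_combination -hrel + β * hgK
  have hud : (algebraMap F (AC F) a * β) ^ Fintype.card F ^ d
      = algebraMap F (AC F) a * β := by
    rw [mul_pow, frobQ_algebraMap, hβd]
  have hαd : (α ^ Fintype.card F ^ d) ^ 2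
      = (algebraMap F (AC F) a * β) * (α ^ Fintype.card F ^ d) + β := by
    have h2 := congrArg (fun x : AC F => x ^ Fintype.card F ^ d) hquad
    rw [frobQ_add, mul_pow, hud, hβd, pow_right_comm] at h2
    exact h2
  have hfactor : (α ^ Fintype.card F ^ d - α) *
      (α ^ Fintype.card F ^ d - (algebraMap F (AC F) a * β - α)) = 0 := by
    linear_combination hαd - hquad
  rcases mul_eq_zero.mp hfactor with hcase | hcase
  · exfalso
    have h3 : α ^ Fintype.card F ^ d = α := by linear_combination hcase
    have h4 := (pow_q_eq_iff F α d).mp h3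
    rw [hdegα] at h4
    have := Nat.le_of_dvd hd0 h4
    omega
  · have hρ : α ^ Fintype.card F ^ d = algebraMap F (AC F) a * β - α := by
      linear_combination hcase
    have hα2d : α ^ Fintype.card F ^ (2 * d) = α := by
      rw [show 2 * d = d + d by ring, ← frobQ_frobQ, hρ, frobQ_sub, mul_pow,
        frobQ_algebraMap, hβd, hρ]
      ring
    have hmd : m ∣ d := by
      have h5 := (pow_q_eq_iff F α (2 * d)).mp hα2d
      rw [hdegα] at h5
      obtain ⟨k, hk⟩ := h5
      refine ⟨k, ?_⟩
      have h6 : 2 * d = 2 * (m * k) := by rw [hk]; ring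
      exact Nat.eq_of_mul_eq_mul_left (by norm_num) h6
    have hdm_eq : d = m := le_antisymm hdle (Nat.le_of_dvd hd0 hmd)
    have hσ : α ^ Fintype.card F ^ m = algebraMap F (AC F) a * β - α := by
      rw [← hdm_eq]; exact hρ
    rw [map_neg, hσ]
    linear_combination (-(algebraMap F (AC F) a)) * hquad

/-! ### The main count -/

set_option maxHeartbeats 1000000 in
lemma card_U_eq (m : ℕ) (hm : 1 < m) :
    ccard F m (2 * m) = 2 * m * Nat.card {f : Polynomial F //
      Irreducible f ∧
        ∃ (a : F) (h : Polynomial F), h.Monic ∧ h.natDegree = m ∧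
          f = ∑ i ∈ Finset.range (m + 1),
            Polynomial.C (h.coeff i) * Polynomial.X ^ (2 * i) *
              (Polynomial.C a * Polynomial.X + 1) ^ (m - i)} := by
  classical
  have hm0 : m ≠ 0 := by omega
  -- the inversion bijection between the trace-condition set and U
  have hUequiv : {γ : AC F // (minpoly F γ).natDegree = 2 * m ∧ Pc F m γ} ≃
      {α : AC F // (minpoly F α).natDegree = 2 * m ∧ ∃ b : F,
        α + α ^ Fintype.card F ^ m
          = algebraMap F (AC F) b * (α * α ^ Fintype.card F ^ m)} :=
    { toFun := fun γ => ⟨γ.1⁻¹, by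
        have hγ0 : γ.1 ≠ 0 := by
          intro h0
          have := γ.2.1
          rw [h0, deg_zero F] at this; omega
        refine ⟨by rw [minpoly_natDegree_inv F γ.1 hγ0]; exact γ.2.1, ?_⟩
        obtain ⟨b, hb⟩ := γ.2.2
        have hσ0 : γ.1 ^ Fintype.card F ^ m ≠ 0 := pow_ne_zero _ hγ0
        refine ⟨b, ?_⟩
        rw [inv_pow]
        rw [show γ.1⁻¹ + (γ.1 ^ Fintype.card F ^ m)⁻¹
            = (γ.1 + γ.1 ^ Fintype.card F ^ m) *
              (γ.1⁻¹ * (γ.1 ^ Fintype.card F ^ m)⁻¹) by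
          field_simp
          ring]
        rw [hb]⟩
      invFun := fun α => ⟨α.1⁻¹, by
        have hα0 : α.1 ≠ 0 := by
          intro h0
          have := α.2.1
          rw [h0, deg_zero F] at this; omega
        refine ⟨by rw [minpoly_natDegree_inv F α.1 hα0]; exact α.2.1, ?_⟩
        obtain ⟨b, hb⟩ := α.2.2
        have hσ0 : α.1 ^ Fintype.card F ^ m ≠ 0 := pow_ne_zero _ hα0
        refine ⟨b, ?_⟩
        rw [inv_pow]
        rw [show α.1⁻¹ + (α.1 ^ Fintype.card F ^ m)⁻¹
            = (α.1 + α.1 ^ Fintype.card F ^ m) *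
              (α.1⁻¹ * (α.1 ^ Fintype.card F ^ m)⁻¹) by
          field_simp
          ring]
        rw [hb]
        field_simp⟩
      left_inv := fun γ => by apply Subtype.ext; exact inv_inv γ.1
      right_inv := fun α => by apply Subtype.ext; exact inv_inv α.1 }
  -- finiteness of U
  haveI hUfin : Finite {α : AC F // (minpoly F α).natDegree = 2 * m ∧ ∃ b : F,
      α + α ^ Fintype.card F ^ m
        = algebraMap F (AC F) b * (α * α ^ Fintype.card F ^ m)} := by
    haveI := finite_Esub F (2 * m) (by omega)
    exact Finite.of_injective
      (fun α => (⟨α.1, pow_q_pow_of_deg_dvd F (by rw [α.2.1])⟩ :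
        {x : AC F // x ^ Fintype.card F ^ (2 * m) = x}))
      (fun x y hxy => by
        simp only [Subtype.mk.injEq] at hxy
        exact Subtype.ext hxy)
  -- the map to irreducible polynomials
  set Φ : {α : AC F // (minpoly F α).natDegree = 2 * m ∧ ∃ b : F,
      α + α ^ Fintype.card F ^ m
        = algebraMap F (AC F) b * (α * α ^ Fintype.card F ^ m)} →
      {f : Polynomial F // Irreducible f ∧
        ∃ (a : F) (h : Polynomial F), h.Monic ∧ h.natDegree = m ∧
          f = ∑ i ∈ Finset.range (m + 1),
            Polynomial.C (h.coeff i) * Polynomial.X ^ (2 * i) *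
              (Polynomial.C a * Polynomial.X + 1) ^ (m - i)} :=
    fun α => ⟨minpoly F α.1, minpoly.irreducible (isInt F α.1), by
      obtain ⟨b, hb⟩ := α.2.2
      obtain ⟨a, h, hmon, hdeg, heq⟩ := exists_rep_of_cond F m hm0 α.1 α.2.1 b hb
      exact ⟨a, h, hmon, hdeg, heq⟩⟩ with hΦ
  -- roots of elements of SS satisfy the U-condition
  have hroot_cond : ∀ (s : {f : Polynomial F // Irreducible f ∧
      ∃ (a : F) (h : Polynomial F), h.Monic ∧ h.natDegree = m ∧
        f = ∑ i ∈ Finset.range (m + 1),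
          Polynomial.C (h.coeff i) * Polynomial.X ^ (2 * i) *
            (Polynomial.C a * Polynomial.X + 1) ^ (m - i)}) (x : AC F),
      aeval x s.1 = 0 →
      ((minpoly F x).natDegree = 2 * m ∧ (∃ b : F,
        x + x ^ Fintype.card F ^ m
          = algebraMap F (AC F) b * (x * x ^ Fintype.card F ^ m))) ∧
        minpoly F x = s.1 := by
    intro s x hx
    obtain ⟨hirr, a, h, hmon, hdeg, heq⟩ := s.2
    have heq' : s.1 = fsum F m a h := heq
    have hx' : aeval x (fsum F m a h) = 0 := by rw [← heq']; exact hx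
    have hirr' : Irreducible (fsum F m a h) := heq' ▸ hirr
    obtain ⟨hminp, hdegx, hcond⟩ := cond_of_root F m hm0 a h hmon hdeg hirr' x hx'
    exact ⟨⟨hdegx, ⟨-a, hcond⟩⟩, hminp.trans heq'.symm⟩
  have hdeg_s : ∀ s : {f : Polynomial F // Irreducible f ∧
      ∃ (a : F) (h : Polynomial F), h.Monic ∧ h.natDegree = m ∧
        f = ∑ i ∈ Finset.range (m + 1),
          Polynomial.C (h.coeff i) * Polynomial.X ^ (2 * i) *
            (Polynomial.C a * Polynomial.X + 1) ^ (m - i)},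
      s.1.natDegree = 2 * m ∧ s.1.Monic := by
    intro s
    obtain ⟨hirr, a, h, hmon, hdeg, heq⟩ := s.2
    have heq' : s.1 = fsum F m a h := heq
    obtain ⟨h1, h2⟩ := fsum_monic F m hm0 a h hmon hdeg
    exact ⟨by rw [heq']; exact h2, by rw [heq']; exact h1⟩
  -- fibers of Φ are root sets
  have hfib : ∀ s, Nat.card {α // Φ α = s} = 2 * m := by
    intro s
    have hs0 : s.1 ≠ 0 := (hdeg_s s).2.ne_zero
    have hequiv : {α // Φ α = s} ≃ (s.1.rootSet (AC F)) :=
      { toFun := fun α => ⟨α.1.1, by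
          rw [mem_rootSet]
          refine ⟨hs0, ?_⟩
          have hval : minpoly F α.1.1 = s.1 := congrArg Subtype.val α.2
          rw [← hval]
          exact minpoly.aeval F α.1.1⟩
        invFun := fun x => ⟨⟨x.1, (hroot_cond s x.1 ((mem_rootSet.mp x.2).2)).1⟩,
          Subtype.ext (hroot_cond s x.1 ((mem_rootSet.mp x.2).2)).2⟩
        left_inv := fun α => by apply Subtype.ext; apply Subtype.ext; rfl
        right_inv := fun x => by apply Subtype.ext; rfl }
    rw [Nat.card_congr hequiv, Nat.card_eq_fintype_card, card_rootSet_eq_natDegree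
      (PerfectField.separable_of_irreducible s.2.1) (IsAlgClosed.splits _),
      (hdeg_s s).1]
  -- SS is finite
  haveI hSSfin : Finite {f : Polynomial F // Irreducible f ∧
      ∃ (a : F) (h : Polynomial F), h.Monic ∧ h.natDegree = m ∧
        f = ∑ i ∈ Finset.range (m + 1),
          Polynomial.C (h.coeff i) * Polynomial.X ^ (2 * i) *
            (Polynomial.C a * Polynomial.X + 1) ^ (m - i)} := by
    have hchoose : ∀ s : {f : Polynomial F // Irreducible f ∧
        ∃ (a : F) (h : Polynomial F), h.Monic ∧ h.natDegree = m ∧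
          f = ∑ i ∈ Finset.range (m + 1),
            Polynomial.C (h.coeff i) * Polynomial.X ^ (2 * i) *
              (Polynomial.C a * Polynomial.X + 1) ^ (m - i)},
        ∃ x : AC F, aeval x s.1 = 0 := by
      intro s
      apply IsAlgClosed.exists_aeval_eq_zero
      have h1 : 0 < s.1.natDegree := by rw [(hdeg_s s).1]; omega
      have h2 := Polynomial.natDegree_pos_iff_degree_pos.mp h1
      intro hc
      rw [hc] at h2
      exact lt_irrefl 0 h2
    apply Finite.of_injective (fun s =>
      (⟨Classical.choose (hchoose s),
        (hroot_cond s _ (Classical.choose_spec (hchoose s))).1⟩ :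
        {α : AC F // (minpoly F α).natDegree = 2 * m ∧ ∃ b : F,
          α + α ^ Fintype.card F ^ m
            = algebraMap F (AC F) b * (α * α ^ Fintype.card F ^ m)}))
    intro s t hst
    apply Subtype.ext
    have h1 := (hroot_cond s _ (Classical.choose_spec (hchoose s))).2
    have h2 := (hroot_cond t _ (Classical.choose_spec (hchoose t))).2
    have h3 : Classical.choose (hchoose s) = Classical.choose (hchoose t) := by
      simpa using congrArg Subtype.val hst
    rw [← h1, h3, h2]
  -- count
  haveI : Fintype {f : Polynomial F // Irreducible f ∧
      ∃ (a : F) (h : Polynomial F), h.Monic ∧ h.natDegree = m ∧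
        f = ∑ i ∈ Finset.range (m + 1),
          Polynomial.C (h.coeff i) * Polynomial.X ^ (2 * i) *
            (Polynomial.C a * Polynomial.X + 1) ^ (m - i)} := Fintype.ofFinite _
  haveI : ∀ s, Finite {α // Φ α = s} := fun s => Subtype.finite
  haveI : ∀ s, Fintype {α // Φ α = s} := fun s => Fintype.ofFinite _
  have hcount : Nat.card {α : AC F // (minpoly F α).natDegree = 2 * m ∧ ∃ b : F,
      α + α ^ Fintype.card F ^ m
        = algebraMap F (AC F) b * (α * α ^ Fintype.card F ^ m)}
      = ∑ s, Nat.card {α // Φ α = s} := by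
    rw [Nat.card_congr (Equiv.sigmaFiberEquiv Φ).symm, Nat.card_eq_fintype_card,
      Fintype.card_sigma]
    congr 1
    ext s
    rw [Nat.card_eq_fintype_card]
  calc ccard F m (2 * m)
      = Nat.card {α : AC F // (minpoly F α).natDegree = 2 * m ∧ ∃ b : F,
          α + α ^ Fintype.card F ^ m
            = algebraMap F (AC F) b * (α * α ^ Fintype.card F ^ m)} :=
        Nat.card_congr hUequiv
    _ = ∑ s, Nat.card {α // Φ α = s} := hcount
    _ = 2 * m * Nat.card {f : Polynomial F // Irreducible f ∧
          ∃ (a : F) (h : Polynomial F), h.Monic ∧ h.natDegree = m ∧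
            f = ∑ i ∈ Finset.range (m + 1),
              Polynomial.C (h.coeff i) * Polynomial.X ^ (2 * i) *
                (Polynomial.C a * Polynomial.X + 1) ^ (m - i)} := by
        rw [Finset.sum_congr rfl (fun s _ => hfib s), Finset.sum_const,
          Finset.card_univ, smul_eq_mul, Nat.card_eq_fintype_card]
        ring

/-! ### Final divisor-sum evaluations -/

lemma filter_odd_divisors_pow2 (ℓ : ℕ) :
    ((2 ^ ℓ : ℕ).divisors.filter (fun d => Odd d)) = {1} := by
  ext c
  simp only [Finset.mem_filter, Nat.mem_divisors, Finset.mem_singleton]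
  constructor
  · rintro ⟨⟨hdvd, h0⟩, hodd⟩
    obtain ⟨j, hj, rfl⟩ := (Nat.dvd_prime_pow Nat.prime_two).mp hdvd
    rcases Nat.eq_zero_or_pos j with rfl | hj0
    · simp
    · exfalso
      have heven : Even (2 ^ j) := Nat.even_pow.mpr ⟨even_two, hj0.ne'⟩
      exact (Nat.not_odd_iff_even.mpr heven) hodd
  · rintro rfl
    exact ⟨⟨one_dvd _, pow_ne_zero _ (by norm_num)⟩, odd_one⟩

lemma filter_odd_divisors_mul (ℓ k : ℕ) (hk : Odd k) (hk0 : k ≠ 0) :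
    ((2 ^ ℓ * k : ℕ).divisors.filter (fun d => Odd d)) = k.divisors := by
  ext c
  simp only [Finset.mem_filter, Nat.mem_divisors]
  constructor
  · rintro ⟨⟨hdvd, h0⟩, hodd⟩
    refine ⟨?_, hk0⟩
    have hcop : Nat.Coprime c (2 ^ ℓ) :=
      Nat.Coprime.pow_right ℓ (Nat.coprime_two_right.mpr hodd)
    exact hcop.dvd_of_dvd_mul_left hdvd
  · rintro ⟨hdvd, _⟩
    have hodd : Odd c := by
      rcases Nat.even_or_odd c with he | ho
      · exfalso
        obtain ⟨c', rfl⟩ := he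
        obtain ⟨t, ht⟩ := hdvd
        have : Even k := ⟨c' * t, by rw [ht]; ring⟩
        exact (Nat.not_odd_iff_even.mpr this) hk
      · exact ho
    refine ⟨⟨dvd_mul_of_dvd_right hdvd _, ?_⟩, hodd⟩
    positivity

lemma sum_moebius_divisors_eq_zero (k : ℕ) (h0 : k ≠ 0) (h1 : k ≠ 1) :
    ∑ d ∈ k.divisors, (ArithmeticFunction.moebius d : ℤ) = 0 := by
  have hz := congrArg (fun f : ArithmeticFunction ℤ => f k)
    ArithmeticFunction.moebius_mul_coe_zeta
  simp only [ArithmeticFunction.mul_apply, ArithmeticFunction.one_apply, if_neg h1] at hz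
  calc ∑ d ∈ k.divisors, (ArithmeticFunction.moebius d : ℤ)
      = ∑ x ∈ k.divisorsAntidiagonal, (ArithmeticFunction.moebius x.1 : ℤ) :=
        (Nat.sum_divisorsAntidiagonal (fun d _ => (ArithmeticFunction.moebius d : ℤ))).symm
    _ = ∑ x ∈ k.divisorsAntidiagonal, ArithmeticFunction.moebius x.1 *
          (((ArithmeticFunction.zeta : ArithmeticFunction ℕ) : ArithmeticFunction ℤ)) x.2 := by
        apply Finset.sum_congr rfl
        intro x hx
        have hx2 : x.2 ≠ 0 := (Nat.ne_zero_of_mem_divisorsAntidiagonal hx).2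
        rw [ArithmeticFunction.natCoe_apply, ArithmeticFunction.zeta_apply_ne hx2]
        norm_num
    _ = 0 := hz

end Stmt10Aux

open Stmt10Aux in
/-- The count of irreducible polynomials over `F_q` of the form
`(aX+1)^m h(X²/(aX+1)) = ∑ h_i X^{2i} (aX+1)^{m-i}` with `a ∈ F_q` and `h`
monic of degree `m > 1`. If `S` is the set of such irreducible polynomials and
`N = |S|`, then `2mN = q(q^m - 1)` if `q` is odd and `m = 2^ℓ`;
`2mN = q ∑_{d ∣ m, d odd} μ(d) q^{m/d}` if `q` is odd and `m = 2^ℓ k` with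
`k ≥ 3` odd; and `2mN = (q-1) ∑_{d ∣ m, d odd} μ(d) q^{m/d}` if `q` is even. -/
theorem stmt10 (F : Type) [Field F] [Fintype F] (m : ℕ) (hm : 1 < m)
    (N : ℕ)
    (hN : N = Nat.card {f : Polynomial F //
      Irreducible f ∧
        ∃ (a : F) (h : Polynomial F), h.Monic ∧ h.natDegree = m ∧
          f = ∑ i ∈ Finset.range (m + 1),
            Polynomial.C (h.coeff i) * Polynomial.X ^ (2 * i) *
              (Polynomial.C a * Polynomial.X + 1) ^ (m - i)}) :
    (Odd (Fintype.card F) → (∃ ℓ : ℕ, 1 ≤ ℓ ∧ m = 2 ^ ℓ) →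
      (2 * m : ℤ) * N = (Fintype.card F : ℤ) * ((Fintype.card F : ℤ) ^ m - 1)) ∧
    (Odd (Fintype.card F) → (∃ ℓ k : ℕ, Odd k ∧ 3 ≤ k ∧ m = 2 ^ ℓ * k) →
      (2 * m : ℤ) * N = (Fintype.card F : ℤ) *
        ∑ d ∈ m.divisors.filter (fun d => Odd d),
          ArithmeticFunction.moebius d * (Fintype.card F : ℤ) ^ (m / d)) ∧
    (Even (Fintype.card F) →
      (2 * m : ℤ) * N = ((Fintype.card F : ℤ) - 1) *
        ∑ d ∈ m.divisors.filter (fun d => Odd d),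
          ArithmeticFunction.moebius d * (Fintype.card F : ℤ) ^ (m / d)) := by
  have hm0 : m ≠ 0 := by omega
  have hkey : ccard F m (2 * m) = 2 * m * N := by
    rw [hN]; exact card_U_eq F m hm
  refine ⟨?_, ?_, ?_⟩
  · rintro hq ⟨ℓ, hℓ, hmeq⟩
    have hmaster := master_odd F m hm0 hq
    rw [hkey] at hmaster
    have hS : ∑ c ∈ m.divisors.filter (fun c => Odd c),
        (ArithmeticFunction.moebius c : ℤ) = 1 := by
      rw [hmeq, filter_odd_divisors_pow2, Finset.sum_singleton,
        ArithmeticFunction.moebius_apply_one]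
    have hD : ∑ d ∈ m.divisors.filter (fun d => Odd d),
        ArithmeticFunction.moebius d * (Fintype.card F : ℤ) ^ (m / d)
        = (Fintype.card F : ℤ) ^ m := by
      conv_lhs => rw [hmeq, filter_odd_divisors_pow2]
      rw [Finset.sum_singleton, ArithmeticFunction.moebius_apply_one, Nat.div_one]
      rw [← hmeq]
      norm_num
    rw [hS, hD] at hmaster
    push_cast at hmaster
    linarith
  · rintro hq ⟨ℓ, k, hkodd, hk3, hmeq⟩
    have hmaster := master_odd F m hm0 hq
    rw [hkey] at hmaster
    have hS : ∑ c ∈ m.divisors.filter (fun c => Odd c),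
        (ArithmeticFunction.moebius c : ℤ) = 0 := by
      rw [hmeq, filter_odd_divisors_mul ℓ k hkodd (by omega)]
      exact sum_moebius_divisors_eq_zero k (by omega) (by omega)
    rw [hS, mul_zero, sub_zero] at hmaster
    push_cast at hmaster
    linarith
  · intro hq
    have hmaster := master_even F m hm0 hq
    rw [hkey] at hmaster
    push_cast at hmaster
    linarith
end
end

section
/- Let q be a prime power and m, n positive integers. Let g ∈ F_q[X] satisfy g(0) = 1 and deg g ≤ n−1, let h(X) = ∑_{i=0}^m h_iX^i ∈ F_q[X] be monic of degree m with h(0) ≠ 0, and set f(X) = ∑_{i=0}^m h_i · X^{n·i} · g(X)^{m−i}. Then f is monic of degree mn with f(0) = h(0), and h(0)^{−1}·reflect_{mn}(f) = (h(0)^{−1}·reflect_m(h)) ∘ (X·reflect_{n−1}(g)), i.e., the monic reciprocal of f equals the composition of the monic reciprocal of h with the polynomial X^n·g(1/X) = X·reflect_{n−1}(g). -/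
open Polynomial Finset

private lemma refl_sum {R : Type*} [CommSemiring R] {ι : Type*} [DecidableEq ι] (s : Finset ι)
    (p : ι → R[X]) (N : ℕ) :
    reflect N (∑ i ∈ s, p i) = ∑ i ∈ s, reflect N (p i) := by
  induction s using Finset.induction with
  | empty => ext i; simp [coeff_reflect]
  | insert _ _ hx ih => simp [Finset.sum_insert hx, reflect_add, ih]

private lemma refl_succ {R : Type*} [CommSemiring R] (p : R[X]) (N : ℕ)
    (hp : p.natDegree ≤ N) : reflect (N + 1) p = X * reflect N p := by
  have h1 : reflect 1 (1 : R[X]) = X := by simpa using reflect_monomial 1 0 (R := R)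
  have := reflect_mul (1 : R[X]) p (F := 1) (G := N) (by simp) hp
  simpa [add_comm, h1] using this

private lemma refl_pow {R : Type*} [CommSemiring R] (g : R[X]) (N : ℕ)
    (hg : g.natDegree ≤ N) : ∀ k, reflect (N * k) (g ^ k) = (reflect N g) ^ k
  | 0 => by ext i; simp [coeff_reflect, coeff_one]
  | k + 1 => by
    have hk := refl_pow g N hg k
    have hd : (g ^ k).natDegree ≤ N * k :=
      natDegree_pow_le.trans (by rw [mul_comm]; exact Nat.mul_le_mul_right k hg)
    rw [pow_succ, Nat.mul_succ, reflect_mul _ _ hd hg, hk, pow_succ]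


/-- For `g` with `g(0) = 1`, `deg g ≤ n - 1`, and `h` monic of degree `m` with
`h(0) ≠ 0`, the polynomial `f = ∑ h_i X^{n i} g^{m-i}` is monic of degree `mn`
with `f(0) = h(0)`, and its monic reciprocal equals the composition of the
monic reciprocal of `h` with `X^n g(1/X) = X · reflect_{n-1}(g)`. -/
theorem stmt13 (F : Type) [Field F] [Fintype F] (m n : ℕ) (hm : 0 < m) (hn : 0 < n)
    (g h : Polynomial F)
    (hg0 : Polynomial.eval 0 g = 1) (hgdeg : g.natDegree ≤ n - 1)
    (hmonic : h.Monic) (hdeg : h.natDegree = m) (hh0 : Polynomial.eval 0 h ≠ 0)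
    (f : Polynomial F)
    (hf : f = ∑ i ∈ Finset.range (m + 1),
      Polynomial.C (h.coeff i) * Polynomial.X ^ (n * i) * g ^ (m - i)) :
    f.Monic ∧ f.natDegree = m * n ∧ Polynomial.eval 0 f = Polynomial.eval 0 h ∧
      Polynomial.C (Polynomial.eval 0 h)⁻¹ * Polynomial.reflect (m * n) f =
        (Polynomial.C (Polynomial.eval 0 h)⁻¹ * Polynomial.reflect m h).comp
          (Polynomial.X * Polynomial.reflect (n - 1) g) := by
  obtain ⟨n, rfl⟩ : ∃ n', n = n' + 1 := ⟨n - 1, by omega⟩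
  simp only [Nat.add_sub_cancel] at hgdeg ⊢
  have hgn : g.natDegree ≤ n + 1 := hgdeg.trans (by omega)
  have hterm : ∀ i, i ≤ m →
      (Polynomial.C (h.coeff i) * X ^ ((n+1) * i) * g ^ (m - i)).natDegree
        ≤ (n+1) * i + n * (m - i) := by
    intro i hi
    refine natDegree_mul_le.trans (add_le_add ?_ ?_)
    · exact natDegree_mul_le.trans (by simp)
    · exact natDegree_pow_le.trans (by exact (Nat.mul_le_mul_left _ hgdeg).trans (Nat.mul_comm _ _).le)
  have harith : ∀ i, i ≤ m → (n+1) * i + n * (m - i) + (m - i) = m * (n+1) := by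
    intro i hi
    obtain ⟨j, rfl⟩ := Nat.exists_eq_add_of_le hi
    simp only [Nat.add_sub_cancel_left]
    ring
  have h1 : h.coeff m = 1 := hdeg ▸ hmonic.coeff_natDegree
  have hcoef : f.coeff (m * (n+1)) = 1 := by
    rw [hf, finset_sum_coeff, Finset.sum_eq_single m]
    · simp [h1, coeff_X_pow, mul_comm]
    · intro i hi hne
      have hi' : i ≤ m := Nat.lt_succ_iff.mp (Finset.mem_range.mp hi)
      apply coeff_eq_zero_of_natDegree_lt
      refine lt_of_le_of_lt (hterm i hi') ?_
      rw [← harith i hi']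
      exact Nat.lt_add_of_pos_right (by omega)
    · intro hmem; exact absurd (Finset.self_mem_range_succ m) hmem
  have hdegle : f.natDegree ≤ m * (n+1) := by
    rw [hf]
    apply natDegree_sum_le_of_forall_le
    intro i hi
    have hi' : i ≤ m := Nat.lt_succ_iff.mp (Finset.mem_range.mp hi)
    refine (hterm i hi').trans ?_
    rw [← harith i hi']
    exact Nat.le_add_right _ _
  have hfm : f.Monic := monic_of_natDegree_le_of_coeff_eq_one _ hdegle hcoef
  have hfdeg : f.natDegree = m * (n+1) :=
    le_antisymm hdegle (le_natDegree_of_ne_zero (by rw [hcoef]; exact one_ne_zero))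
  have heval : Polynomial.eval 0 f = Polynomial.eval 0 h := by
    rw [hf, eval_finset_sum, Finset.sum_eq_single 0]
    · simp [hg0, coeff_zero_eq_eval_zero]
    · intro i hi hne
      simp [hg0, zero_pow (Nat.mul_ne_zero (Nat.succ_ne_zero n) hne)]
    · simp
  have hh : reflect m h = ∑ i ∈ Finset.range (m+1), C (h.coeff i) * X ^ (m - i) := by
    conv_lhs => rw [h.as_sum_range_C_mul_X_pow, hdeg]
    rw [refl_sum]
    refine Finset.sum_congr rfl fun i hi => ?_
    rw [reflect_C_mul_X_pow, revAt_le (Nat.lt_succ_iff.mp (Finset.mem_range.mp hi))]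
  have key : reflect (m * (n+1)) f = (reflect m h).comp (X * reflect n g) := by
    rw [hf, refl_sum, hh, comp, eval₂_finset_sum]
    refine Finset.sum_congr rfl fun i hi => ?_
    have hi' : i ≤ m := Nat.lt_succ_iff.mp (Finset.mem_range.mp hi)
    have hsplit : m * (n+1) = (n+1) * i + (n+1) * (m - i) := by
      obtain ⟨j, rfl⟩ := Nat.exists_eq_add_of_le hi'
      simp only [Nat.add_sub_cancel_left]
      ring
    have hdX : ((X : Polynomial F) ^ ((n+1) * i)).natDegree ≤ (n+1) * i :=
      (natDegree_X_pow _).le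
    have hdg : (g ^ (m - i)).natDegree ≤ (n+1) * (m - i) :=
      natDegree_pow_le.trans (by exact (Nat.mul_le_mul_left _ hgn).trans (Nat.mul_comm _ _).le)
    rw [mul_assoc, reflect_C_mul, hsplit, reflect_mul _ _ hdX hdg, reflect_monomial,
      revAt_le le_rfl, Nat.sub_self, pow_zero, one_mul, refl_pow g (n+1) hgn,
      refl_succ g n hgdeg]
    simp [eval₂_mul, eval₂_pow]
  exact ⟨hfm, hfdeg, heval, by rw [key, mul_comp, C_comp]⟩
end

section
/- Let F be a finite field, let h ∈ F[X] be a monic irreducible polynomial of degree m ≥ 1, let K be a field extension of F of degree m containing a root α of h, and let g ∈ F[X] be monic of degree n ≥ 1. Then the composition h(g(X)) is irreducible in F[X] if and only if the polynomial g(X) − α (the image of g in K[X] minus the constant α) is irreducible in K[X]. -/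
open Polynomial IntermediateField


/-- For a finite field `F`, a degree-`m` extension `K/F`, a monic irreducible
`h ∈ F[X]` of degree `m` with root `α ∈ K`, and `g ∈ F[X]` monic of degree
`n ≥ 1`: `h(g(X))` is irreducible in `F[X]` if and only if `g(X) - α` is
irreducible in `K[X]`. -/
theorem stmt14 (F K : Type) [Field F] [Fintype F] [Field K] [Algebra F K]
    (m n : ℕ) (hm : 1 ≤ m) (hn : 1 ≤ n) (hrank : Module.finrank F K = m)
    (h : Polynomial F) (hmonic : h.Monic) (hdeg : h.natDegree = m)
    (hirr : Irreducible h) (α : K) (hroot : Polynomial.aeval α h = 0)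
    (g : Polynomial F) (hgmonic : g.Monic) (hgdeg : g.natDegree = n) :
    Irreducible (h.comp g) ↔
      Irreducible (g.map (algebraMap F K) - Polynomial.C α) := by
  have hn0 : n ≠ 0 := by omega
  have hintα : IsIntegral F α := ⟨h, hmonic, by rwa [← aeval_def]⟩
  have hminα : minpoly F α = h := (minpoly.eq_of_irreducible_of_monic hirr hroot hmonic).symm
  haveI : FiniteDimensional F K := FiniteDimensional.of_finrank_pos (by omega)
  -- the polynomial in K[X]
  set Gk : Polynomial K := g.map (algebraMap F K) - C α with hGk
  have hGkdeg : Gk.natDegree = n := by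
    rw [hGk, natDegree_sub_C, natDegree_map, hgdeg]
  have hGkmonic : Gk.Monic := by
    refine (hgmonic.map (algebraMap F K)).sub_of_left ?_
    refine lt_of_le_of_lt degree_C_le ?_
    rw [degree_map, degree_eq_natDegree hgmonic.ne_zero, hgdeg]
    exact_mod_cast by omega
  constructor
  · -- forward direction via degree counting in an algebraic closure
    intro hcomp
    set Ω := AlgebraicClosure K
    have hGΩ : (Gk.map (algebraMap K Ω)).degree ≠ 0 := by
      rw [degree_map, degree_eq_natDegree hGkmonic.ne_zero, hGkdeg]
      exact_mod_cast by omega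
    obtain ⟨β, hβ⟩ := IsAlgClosed.exists_root _ hGΩ
    have hβroot : Polynomial.aeval β Gk = 0 := by
      rwa [aeval_def, ← eval_map, ← IsRoot.def]
    have hgβ : Polynomial.aeval β g = algebraMap K Ω α := by
      have := hβroot
      rw [hGk, map_sub, aeval_C, aeval_map_algebraMap, sub_eq_zero] at this
      exact this
    have hcomproot : Polynomial.aeval β (h.comp g) = 0 := by
      rw [aeval_comp, hgβ, Polynomial.aeval_algebraMap_apply, hroot, map_zero]
    have hintβK : IsIntegral K β := ⟨Gk, hGkmonic, by rwa [← aeval_def]⟩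
    have hintβF : IsIntegral F β :=
      ⟨h.comp g, hmonic.comp hgmonic (by rwa [hgdeg]), by rwa [← aeval_def]⟩
    have hminβ : minpoly F β = h.comp g :=
      (minpoly.eq_of_irreducible_of_monic hcomp hcomproot
        (hmonic.comp hgmonic (by rwa [hgdeg]))).symm
    have hminβdeg : (minpoly F β).natDegree = m * n := by
      rw [hminβ, natDegree_comp, hdeg, hgdeg]
    -- intermediate field K⟮β⟯
    haveI : FiniteDimensional K K⟮β⟯ := IntermediateField.adjoin.finiteDimensional hintβK
    haveI : FiniteDimensional F K⟮β⟯ := FiniteDimensional.trans F K K⟮β⟯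
    haveI : IsScalarTower F K⟮β⟯ Ω := IsScalarTower.of_algebraMap_eq fun x => by
      rw [IsScalarTower.algebraMap_apply F K Ω, IsScalarTower.algebraMap_apply F K K⟮β⟯]
      rfl
    have hfr : Module.finrank K K⟮β⟯ = (minpoly K β).natDegree :=
      IntermediateField.adjoin.finrank hintβK
    have hdvd : minpoly K β ∣ Gk := minpoly.dvd K β hβroot
    have hdle : (minpoly K β).natDegree ≤ n := by
      rw [← hGkdeg]
      exact natDegree_le_of_dvd hdvd hGkmonic.ne_zero
    have hge : m * n ≤ Module.finrank F K⟮β⟯ := by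
      have h1 : minpoly F (AdjoinSimple.gen K β) = minpoly F β := by
        have := minpoly.algebraMap_eq (algebraMap K⟮β⟯ Ω).injective
          (AdjoinSimple.gen K β) (A := F)
        rw [AdjoinSimple.algebraMap_gen] at this
        exact this.symm
      have h2 := minpoly.natDegree_le (AdjoinSimple.gen K β) (A := F)
      rw [h1, hminβdeg] at h2
      exact h2
    have hmul : Module.finrank F K⟮β⟯ = m * (minpoly K β).natDegree := by
      rw [← hrank, ← hfr, Module.finrank_mul_finrank F K K⟮β⟯]
    have hdeq : (minpoly K β).natDegree = n := by
      rw [hmul] at hge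
      have := Nat.le_of_mul_le_mul_left hge (by omega)
      omega
    -- conclude Gk = minpoly K β
    obtain ⟨c, hc⟩ := hdvd
    have hcmonic : c.Monic := (minpoly.monic hintβK).of_mul_monic_left (hc ▸ hGkmonic)
    have hcdeg : c.natDegree = 0 := by
      have := congrArg natDegree hc
      rw [hGkdeg, (minpoly.monic hintβK).natDegree_mul hcmonic, hdeq] at this
      omega
    have hc1 : c = 1 := hcmonic.natDegree_eq_zero.mp hcdeg
    rw [hc1, mul_one] at hc
    rw [hc]
    exact minpoly.irreducible hintβK
  · -- reverse direction via `Polynomial.irreducible_comp`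
    intro hGirr
    refine Polynomial.irreducible_comp hmonic hgmonic hirr ?_
    intro E _ _ x hx
    have hxne : minpoly F x ≠ 0 := hx ▸ hmonic.ne_zero
    have hintx : IsIntegral F x := by
      by_contra hcon
      exact hxne (minpoly.eq_zero hcon)
    -- K = F⟮α⟯
    have hfrα : Module.finrank F F⟮α⟯ = m := by
      rw [IntermediateField.adjoin.finrank hintα, hminα, hdeg]
    have htop : F⟮α⟯ = ⊤ := by
      have hsub : Subalgebra.toSubmodule F⟮α⟯.toSubalgebra = ⊤ :=
        Submodule.eq_top_of_finrank_eq (by rw [hrank]; exact hfrα)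
      ext y
      simp only [IntermediateField.mem_top, iff_true]
      have : y ∈ (⊤ : Submodule F K) := Submodule.mem_top
      rwa [← hsub] at this
    let pbK : PowerBasis F K :=
      (IntermediateField.adjoin.powerBasis hintα).map
        ((IntermediateField.equivOfEq htop).trans IntermediateField.topEquiv)
    have hpbKgen : pbK.gen = α := rfl
    let pbx : PowerBasis F F⟮x⟯ := IntermediateField.adjoin.powerBasis hintx
    have hpbxgen : pbx.gen = AdjoinSimple.gen F x := rfl
    have hmineq : minpoly F pbK.gen = minpoly F pbx.gen := by
      rw [hpbKgen, hpbxgen, IntermediateField.minpoly_gen, hminα, hx]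
    let ψ : K ≃ₐ[F] F⟮x⟯ := pbK.equivOfMinpoly pbx hmineq
    have hψα : ψ α = AdjoinSimple.gen F x := by
      have := pbK.equivOfMinpoly_gen pbx hmineq
      rwa [hpbKgen, hpbxgen] at this
    let Φ : Polynomial K ≃+* Polynomial F⟮x⟯ := mapEquiv ψ.toRingEquiv
    have hΦ : Φ Gk = g.map (algebraMap F F⟮x⟯) - C (AdjoinSimple.gen F x) := by
      have hcomp : (ψ : K →+* F⟮x⟯).comp (algebraMap F K) = algebraMap F F⟮x⟯ :=
        ψ.toAlgHom.comp_algebraMap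
      rw [hGk]
      show (g.map (algebraMap F K) - C α).map (ψ : K →+* F⟮x⟯) = _
      rw [Polynomial.map_sub, Polynomial.map_map, hcomp, Polynomial.map_C]
      simp [hψα]
    rw [← hΦ]
    exact hGirr.map Φ
end
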